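/- arXiv:2407.08870 — 9 statements merged into one kernel-verified Lean document; each statement's English description precedes it below -/
import Mathlib

section
/- For n ≥ 3, the 1-nearly edge independence number of the path P_n on n vertices equals ⌊(n+1)/2⌋. -/
open scoped Classical

/-- Two edges (as unordered pairs) share a vertex. -/
def ShareVertex {V : Type*} (e f : Sym2 V) : Prop := ∃ v, v ∈ e ∧ v ∈ f

/-- `M` is a 1-nearly edge independent set of `G`: a set of edges of `G` containing
exactly one pair of distinct edges sharing a common vertex. -/
def IsOneNearlyEdgeIndep {V : Type*} (G : SimpleGraph V) (M : Finset (Sym2 V)) : Prop :=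
  ↑M ⊆ G.edgeSet ∧
    (M.offDiag.filter fun p => ShareVertex p.1 p.2).card = 2

/-- The 1-nearly edge independence number `α'₁(G)`: maximum cardinality of a
1-nearly edge independent set, `0` if none exists. -/
noncomputable def edgeAlpha1 {V : Type*} (G : SimpleGraph V) : ℕ :=
  sSup {k | ∃ M : Finset (Sym2 V), IsOneNearlyEdgeIndep G M ∧ M.card = k}

/-- `I` is a 1-nearly vertex independent set of `G`: exactly one pair of distinct
vertices of `I` is adjacent in `G`. -/
def IsOneNearlyVertexIndep {V : Type*} (G : SimpleGraph V) (I : Finset V) : Prop :=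
  (I.offDiag.filter fun p => G.Adj p.1 p.2).card = 2

/-- The 1-nearly vertex independence number `α₁(G)`. -/
noncomputable def vertexAlpha1 {V : Type*} (G : SimpleGraph V) : ℕ :=
  sSup {k | ∃ I : Finset V, IsOneNearlyVertexIndep G I ∧ I.card = k}

open Finset in
noncomputable def vs {n : ℕ} (e : Sym2 (Fin n)) : Finset (Fin n) :=
  Finset.univ.filter (· ∈ e)

lemma vs_mem {n : ℕ} {e : Sym2 (Fin n)} {v : Fin n} : v ∈ vs e ↔ v ∈ e := by simp [vs]

lemma vs_card {n : ℕ} {G : SimpleGraph (Fin n)} {e : Sym2 (Fin n)} (he : e ∈ G.edgeSet) :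
    (vs e).card = 2 := by
  induction e using Sym2.ind with
  | _ a b =>
    rw [SimpleGraph.mem_edgeSet] at he
    have hab : a ≠ b := he.ne
    have h : vs s(a, b) = {a, b} := by
      ext v; simp [vs, Sym2.mem_iff]
    rw [h, Finset.card_insert_of_notMem (by simp [hab]), Finset.card_singleton]

lemma upper_bound {n : ℕ} {G : SimpleGraph (Fin n)} {M : Finset (Sym2 (Fin n))}
    (h : IsOneNearlyEdgeIndep G M) : M.card ≤ (n + 1) / 2 := by
  obtain ⟨hM, hF⟩ := h
  set F := M.offDiag.filter (fun p => ShareVertex p.1 p.2) with hFdef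
  have hF2 : F.card = 2 := by rw [hFdef]; convert hF using 2
  have hmem : ∀ p ∈ F, p.1 ∈ M ∧ p.2 ∈ M ∧ p.1 ≠ p.2 ∧ ShareVertex p.1 p.2 := by
    intro p hp
    simp only [hFdef, Finset.mem_filter, Finset.mem_offDiag] at hp
    tauto
  have hFne : F.Nonempty := by rw [← Finset.card_pos, hF2]; omega
  obtain ⟨⟨a, b⟩, habF⟩ := hFne
  obtain ⟨haM, hbM, hab, hshab⟩ := hmem _ habF
  have hsymm : (b, a) ∈ F := by
    obtain ⟨v, hv1, hv2⟩ := hshab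
    simp only [hFdef, Finset.mem_filter, Finset.mem_offDiag]
    exact ⟨⟨hbM, haM, hab.symm⟩, ⟨v, hv2, hv1⟩⟩
  have hFeq : F = {(a, b), (b, a)} := by
    refine (Finset.eq_of_subset_of_card_le ?_ ?_).symm
    · intro p hp
      simp only [Finset.mem_insert, Finset.mem_singleton] at hp
      rcases hp with h | h <;> rw [h] <;> assumption
    · rw [hF2]
      rw [Finset.card_insert_of_notMem (by simp [Prod.ext_iff, hab]), Finset.card_singleton]
  have honly : ∀ c ∈ M, ∀ d ∈ M, c ≠ d → ShareVertex c d →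
      (c = a ∧ d = b) ∨ (c = b ∧ d = a) := by
    intro c hc d hd hcd hsh
    have hmemF : (c, d) ∈ F := by
      simp only [hFdef, Finset.mem_filter, Finset.mem_offDiag]
      exact ⟨⟨hc, hd, hcd⟩, hsh⟩
    rw [hFeq] at hmemF
    simpa [Prod.ext_iff] using hmemF
  set M' := M.erase a with hM'def
  have hM'sub : ∀ c ∈ M', c ∈ M := fun c hc => Finset.mem_of_mem_erase hc
  have hdisj : ∀ c ∈ M', ∀ d ∈ M', c ≠ d → Disjoint (vs c) (vs d) := by
    intro c hc d hd hcd
    rw [Finset.disjoint_left]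
    intro v hvc hvd
    have hsh : ShareVertex c d := ⟨v, vs_mem.mp hvc, vs_mem.mp hvd⟩
    rcases honly c (hM'sub c hc) d (hM'sub d hd) hcd hsh with ⟨hca, _⟩ | ⟨_, hda⟩
    · exact (Finset.ne_of_mem_erase hc) hca
    · exact (Finset.ne_of_mem_erase hd) hda
  have hT' : (M'.biUnion vs).card = 2 * M'.card := by
    rw [Finset.card_biUnion hdisj]
    rw [Finset.sum_congr rfl (fun c hc => vs_card (hM (hM'sub c hc)))]
    rw [Finset.sum_const, smul_eq_mul, mul_comm]
  have hcap : (vs a ∩ M'.biUnion vs).card ≤ 1 := by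
    have hsub : vs a ∩ M'.biUnion vs ⊆ vs a ∩ vs b := by
      intro v hv
      rw [Finset.mem_inter] at hv ⊢
      obtain ⟨hva, hv'⟩ := hv
      obtain ⟨c, hc, hvc⟩ := Finset.mem_biUnion.mp hv'
      have hca : c ≠ a := Finset.ne_of_mem_erase hc
      have hsh : ShareVertex a c := ⟨v, vs_mem.mp hva, vs_mem.mp hvc⟩
      rcases honly a haM c (hM'sub c hc) (Ne.symm hca) hsh with ⟨_, hcb⟩ | ⟨hab', _⟩
      · exact ⟨hva, hcb ▸ hvc⟩
      · exact absurd hab' hab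
    refine le_trans (Finset.card_le_card hsub) ?_
    rw [Finset.card_le_one]
    intro u hu v hv
    by_contra huv
    rw [Finset.mem_inter] at hu hv
    exact hab (Sym2.eq_of_ne_mem huv (vs_mem.mp hu.1) (vs_mem.mp hv.1)
      (vs_mem.mp hu.2) (vs_mem.mp hv.2))
  have hMins : M = insert a M' := (Finset.insert_erase haM).symm
  have hunion : M.biUnion vs = vs a ∪ M'.biUnion vs := by
    conv_lhs => rw [hMins]
    rw [Finset.biUnion_insert]
  have hbound : (M.biUnion vs).card ≤ n := by
    calc (M.biUnion vs).card ≤ (Finset.univ : Finset (Fin n)).card :=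
          Finset.card_le_card (Finset.subset_univ _)
      _ = n := by simp
  rw [hunion] at hbound
  have h1 : (vs a ∪ M'.biUnion vs).card + (vs a ∩ M'.biUnion vs).card = 2 + 2 * M'.card := by
    rw [Finset.card_union_add_card_inter, vs_card (hM haM), hT']
  have hM'card : M'.card = M.card - 1 := Finset.card_erase_of_mem haM
  have hMpos : 1 ≤ M.card := Finset.card_pos.mpr ⟨a, haM⟩
  omega

open Fin.NatCast in
open Finset in
lemma exists_good {n : ℕ} (hn : 3 ≤ n) :
    ∃ M : Finset (Sym2 (Fin n)),
      IsOneNearlyEdgeIndep (SimpleGraph.pathGraph n) M ∧ M.card = (n + 1) / 2 := by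
  haveI : NeZero n := ⟨by omega⟩
  set g : ℕ → ℕ := fun k => if k = 0 then 0 else 2 * k - 1 with hg
  set f : ℕ → Sym2 (Fin n) := fun i => s(((i : ℕ) : Fin n), (((i + 1 : ℕ)) : Fin n)) with hf
  set K := (n + 1) / 2 with hK
  have hK2 : 2 ≤ K := by omega
  have hglt : ∀ k < K, g k < n - 1 := by
    intro k hk
    by_cases h0 : k = 0 <;> simp only [hg, h0, if_true, if_false, reduceIte] <;> omega
  have hval : ∀ i, i < n → ((i : Fin n) : ℕ) = i := fun i hi => Fin.val_cast_of_lt hi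
  have hcast : ∀ i < n, ∀ j < n, ((i : Fin n) = (j : Fin n)) ↔ i = j := by
    intro i hi j hj
    constructor
    · intro h
      have := congrArg Fin.val h
      rwa [hval i hi, hval j hj] at this
    · rintro rfl; rfl
  have hfinj : ∀ i < n - 1, ∀ j < n - 1, f i = f j → i = j := by
    intro i hi j hj hij
    rw [hf] at hij
    simp only [Sym2.eq_iff] at hij
    rcases hij with ⟨h1, h2⟩ | ⟨h1, h2⟩
    · rw [hcast i (by omega) j (by omega)] at h1; exact h1
    · rw [hcast i (by omega) (j+1) (by omega)] at h1
      rw [hcast (i+1) (by omega) j (by omega)] at h2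
      omega
  have hshare : ∀ i < n - 1, ∀ j < n - 1, ShareVertex (f i) (f j) →
      i = j ∨ i = j + 1 ∨ j = i + 1 := by
    intro i hi j hj ⟨v, hv1, hv2⟩
    rw [hf] at hv1 hv2
    simp only [Sym2.mem_iff] at hv1 hv2
    have key : ∀ a < n, ∀ b < n, v = (a : Fin n) → v = (b : Fin n) → a = b := by
      intro a ha b hb h1 h2
      rw [h1] at h2
      exact (hcast a ha b hb).mp h2
    rcases hv1 with h1 | h1 <;> rcases hv2 with h2 | h2
    · exact Or.inl (key i (by omega) j (by omega) h1 h2)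
    · have := key i (by omega) (j+1) (by omega) h1 h2; omega
    · have := key (i+1) (by omega) j (by omega) h1 h2; omega
    · have := key (i+1) (by omega) (j+1) (by omega) h1 h2; omega
  have hedge : ∀ i < n - 1, f i ∈ (SimpleGraph.pathGraph n).edgeSet := by
    intro i hi
    rw [hf]
    rw [SimpleGraph.mem_edgeSet, SimpleGraph.pathGraph_adj]
    left
    rw [hval i (by omega), hval (i+1) (by omega)]
  refine ⟨(Finset.range K).image (fun k => f (g k)), ⟨?_, ?_⟩, ?_⟩
  · -- edges
    intro e he
    simp only [Finset.coe_image, Set.mem_image, Finset.mem_coe, Finset.mem_range] at he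
    obtain ⟨k, hk, rfl⟩ := he
    exact hedge _ (hglt k hk)
  · -- filter card
    set M := (Finset.range K).image (fun k => f (g k)) with hM
    have hmemM : ∀ e, e ∈ M ↔ ∃ k < K, f (g k) = e := by
      intro e; simp [hM, Finset.mem_image]
    have hf0 : f (g 0) ∈ M := (hmemM _).mpr ⟨0, by omega, rfl⟩
    have hf1 : f (g 1) ∈ M := (hmemM _).mpr ⟨1, by omega, rfl⟩
    have hg0 : g 0 = 0 := by simp [hg]
    have hg1 : g 1 = 1 := by simp [hg]
    have hne01 : f 0 ≠ f 1 := by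
      intro h
      have := hfinj 0 (by omega) 1 (by omega) h
      omega
    have hsh01 : ShareVertex (f 0) (f 1) :=
      ⟨(((0 + 1 : ℕ)) : Fin n), by rw [hf]; exact Sym2.mem_mk_right _ _,
        by rw [hf]; exact Sym2.mem_mk_left _ _⟩
    have hgchar : ∀ k, (k = 0 ∧ g k = 0) ∨ (1 ≤ k ∧ g k = 2 * k - 1) := by
      intro k
      by_cases h : k = 0
      · left; exact ⟨h, by simp [hg, h]⟩
      · right; exact ⟨by omega, by simp [hg, h]⟩
    have hFeq : M.offDiag.filter (fun p => ShareVertex p.1 p.2)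
        = {(f 0, f 1), (f 1, f 0)} := by
      ext ⟨p, q⟩
      simp only [Finset.mem_filter, Finset.mem_offDiag, Finset.mem_insert,
        Finset.mem_singleton, Prod.mk.injEq]
      constructor
      · rintro ⟨⟨hp, hq, hpq⟩, hsh⟩
        obtain ⟨k, hk, rfl⟩ := (hmemM p).mp hp
        obtain ⟨l, hl, rfl⟩ := (hmemM q).mp hq
        have hgk := hglt k hk
        have hgl := hglt l hl
        have hadj := hshare _ hgk _ hgl hsh
        have hkl : g k ≠ g l := fun h => hpq (by rw [h])
        have hck := hgchar k
        have hcl := hgchar l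
        have : (g k = 0 ∧ g l = 1) ∨ (g k = 1 ∧ g l = 0) := by omega
        rcases this with ⟨h1, h2⟩ | ⟨h1, h2⟩
        · left; rw [h1, h2]; exact ⟨rfl, rfl⟩
        · right; rw [h1, h2]; exact ⟨rfl, rfl⟩
      · rintro (⟨rfl, rfl⟩ | ⟨rfl, rfl⟩)
        · refine ⟨⟨?_, ?_, hne01⟩, hsh01⟩
          · rw [← hg0] at *; exact hf0
          · rw [← hg1] at *; exact hf1
        · refine ⟨⟨?_, ?_, hne01.symm⟩, ?_⟩
          · rw [← hg1] at *; exact hf1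
          · rw [← hg0] at *; exact hf0
          · obtain ⟨v, h1, h2⟩ := hsh01; exact ⟨v, h2, h1⟩
    have hcard : (M.offDiag.filter fun p => ShareVertex p.1 p.2).card = 2 := by
      rw [hFeq]
      rw [Finset.card_insert_of_notMem (by simp [Prod.ext_iff, hne01]), Finset.card_singleton]
    convert hcard using 2
  · -- cardinality
    rw [Finset.card_image_of_injOn, Finset.card_range]
    intro k hk l hl hkl
    simp only [Finset.coe_range, Set.mem_Iio] at hk hl
    have hgkl := hfinj _ (hglt k hk) _ (hglt l hl) hkl
    have hck : (k = 0 ∧ g k = 0) ∨ (1 ≤ k ∧ g k = 2 * k - 1) := by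
      by_cases h : k = 0
      · left; exact ⟨h, by simp [hg, h]⟩
      · right; exact ⟨by omega, by simp [hg, h]⟩
    have hcl : (l = 0 ∧ g l = 0) ∨ (1 ≤ l ∧ g l = 2 * l - 1) := by
      by_cases h : l = 0
      · left; exact ⟨h, by simp [hg, h]⟩
      · right; exact ⟨by omega, by simp [hg, h]⟩
    omega


theorem edgeAlpha1_pathGraph {n : ℕ} (hn : 3 ≤ n) :
    edgeAlpha1 (SimpleGraph.pathGraph n) = (n + 1) / 2 := by
  obtain ⟨M, hM, hMcard⟩ := exists_good hn
  have hbdd : ∀ k ∈ {k | ∃ M : Finset (Sym2 (Fin n)),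
      IsOneNearlyEdgeIndep (SimpleGraph.pathGraph n) M ∧ M.card = k}, k ≤ (n + 1) / 2 := by
    rintro k ⟨N, hN, rfl⟩
    exact upper_bound hN
  apply le_antisymm
  · exact csSup_le ⟨(n + 1) / 2, M, hM, hMcard⟩ hbdd
  · exact le_csSup ⟨(n + 1) / 2, hbdd⟩ ⟨M, hM, hMcard⟩
end

section
/- For n ≥ 3, the 1-nearly edge independence number of the cycle C_n on n vertices equals ⌊(n+1)/2⌋. -/
open scoped Classical

/-! ### Auxiliary material -/

namespace CycleAux

open Finset SimpleGraph

variable {m : ℕ}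

/-- The `i`-th edge of the cycle. -/
def cedge (m : ℕ) (i : Fin (m+3)) : Sym2 (Fin (m+3)) := s(i, i+1)

lemma cedge_injective : Function.Injective (cedge m) := by
  intro i j h
  rw [cedge, cedge, Sym2.eq_iff] at h
  rcases h with ⟨h1, _⟩ | ⟨h1, h2⟩
  · exact h1
  · exfalso
    have h3 : i + (1 + 1) = i + 0 := by rw [← add_assoc, h2, ← h1, add_zero]
    have h4 := add_left_cancel h3
    rw [Fin.ext_iff, Fin.val_add, Fin.val_one, Fin.val_zero] at h4
    simp [Nat.mod_eq_of_lt (show 1 + 1 < m + 3 by omega)] at h4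

lemma adj_cedge (i : Fin (m+3)) : (cycleGraph (m+3)).Adj i (i+1) := by
  rw [cycleGraph_adj']
  right
  rw [add_sub_cancel_left, Fin.val_one]

lemma offDiag_irrel (inst : DecidableEq (Sym2 (Fin (m+3)))) (M : Finset (Sym2 (Fin (m+3)))) :
    @Finset.offDiag _ M = M.offDiag := by congr!

lemma cedge_mem_edgeSet (i : Fin (m+3)) : cedge m i ∈ (cycleGraph (m+3)).edgeSet := by
  rw [cedge, SimpleGraph.mem_edgeSet]
  exact adj_cedge i

lemma mem_cedge {v i : Fin (m+3)} : v ∈ cedge m i ↔ v = i ∨ v = i + 1 := by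
  rw [cedge, Sym2.mem_iff]

lemma edge_form {e : Sym2 (Fin (m+3))} (he : e ∈ (cycleGraph (m+3)).edgeSet) :
    ∃ c, e = cedge m c := by
  induction e using Sym2.ind with
  | _ a b =>
    rw [SimpleGraph.mem_edgeSet, cycleGraph_adj'] at he
    rcases he with h | h
    · refine ⟨b, ?_⟩
      have h' : a - b = 1 := by ext; rw [h, Fin.val_one]
      have hab : a = b + 1 := (sub_eq_iff_eq_add.mp h').trans (add_comm 1 b)
      rw [hab, cedge]
      exact Sym2.eq_swap
    · refine ⟨a, ?_⟩
      have h' : b - a = 1 := by ext; rw [h, Fin.val_one]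
      have hab : b = a + 1 := (sub_eq_iff_eq_add.mp h').trans (add_comm 1 a)
      rw [hab, cedge]

lemma self_ne_add_one (c : Fin (m+3)) : c ≠ c + 1 :=
  left_ne_add.mpr one_ne_zero

lemma card_filter_mem_cedge (c : Fin (m+3)) :
    (Finset.univ.filter (fun v => v ∈ cedge m c)).card = 2 := by
  have : (Finset.univ.filter (fun v => v ∈ cedge m c)) = {c, c + 1} := by
    ext v
    simp [mem_cedge]
  rw [this, Finset.card_pair (self_ne_add_one c)]

lemma eq_of_mem_mem {e f : Sym2 (Fin (m+3))} {v w : Fin (m+3)} (hvw : v ≠ w)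
    (h1 : v ∈ e) (h2 : w ∈ e) (h3 : v ∈ f) (h4 : w ∈ f) : e = f := by
  rw [(Sym2.mem_and_mem_iff hvw).mp ⟨h1, h2⟩, (Sym2.mem_and_mem_iff hvw).mp ⟨h3, h4⟩]

/-! ### Upper bound -/

lemma sum_deg (M : Finset (Sym2 (Fin (m+3)))) (hM : ↑M ⊆ (cycleGraph (m+3)).edgeSet) :
    ∑ v : Fin (m + 3), (M.filter (fun e => v ∈ e)).card = 2 * M.card := by
  have : ∀ v : Fin (m+3), (M.filter (fun e => v ∈ e)).card
      = ∑ e ∈ M, if v ∈ e then 1 else 0 := fun v => Finset.card_filter _ _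
  simp_rw [this]
  rw [Finset.sum_comm]
  have : ∀ e ∈ M, (∑ v : Fin (m+3), if v ∈ e then 1 else 0) = 2 := by
    intro e he
    obtain ⟨c, rfl⟩ := edge_form (hM he)
    rw [← Finset.card_filter]
    exact card_filter_mem_cedge c
  rw [Finset.sum_congr rfl this, Finset.sum_const, smul_eq_mul, mul_comm]

lemma deg_le_two (M : Finset (Sym2 (Fin (m+3)))) (hM : ↑M ⊆ (cycleGraph (m+3)).edgeSet)
    (v : Fin (m+3)) : (M.filter (fun e => v ∈ e)).card ≤ 2 := by
  have hsub : M.filter (fun e => v ∈ e) ⊆ {cedge m (v - 1), cedge m v} := by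
    intro e he
    rw [Finset.mem_filter] at he
    obtain ⟨c, rfl⟩ := edge_form (hM he.1)
    rcases mem_cedge.mp he.2 with h | h
    · subst h
      simp [Finset.mem_insert]
    · have : c = v - 1 := by rw [h, add_sub_cancel_right]
      subst this
      simp [Finset.mem_insert]
  calc (M.filter (fun e => v ∈ e)).card ≤ ({cedge m (v - 1), cedge m v} : Finset _).card :=
        Finset.card_le_card hsub
    _ ≤ 2 := Finset.card_insert_le _ _ |>.trans (by simp)

lemma at_most_one_double (M : Finset (Sym2 (Fin (m+3))))
    (hcard : (M.offDiag.filter fun p => ShareVertex p.1 p.2).card = 2)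
    (v w : Fin (m+3)) (hv : 2 ≤ (M.filter (fun e => v ∈ e)).card)
    (hw : 2 ≤ (M.filter (fun e => w ∈ e)).card) : v = w := by
  by_contra hvw
  obtain ⟨e, he, f, hf, hef⟩ := Finset.one_lt_card.mp (by omega : 1 < (M.filter (fun e => v ∈ e)).card)
  obtain ⟨g, hg, h, hh, hgh⟩ := Finset.one_lt_card.mp (by omega : 1 < (M.filter (fun e => w ∈ e)).card)
  rw [Finset.mem_filter] at he hf hg hh
  -- the four ordered pairs are distinct and all lie in the filter
  have key : ∀ a b : Sym2 (Fin (m+3)), v ∈ a → w ∈ a → v ∈ b → w ∈ b → a = b := by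
    intro a b h1 h2 h3 h4
    exact eq_of_mem_mem hvw h1 h2 h3 h4
  have hsub : ({(e, f), (f, e), (g, h), (h, g)} : Finset (Sym2 (Fin (m+3)) × Sym2 (Fin (m+3))))
      ⊆ M.offDiag.filter fun p => ShareVertex p.1 p.2 := by
    intro p hp
    simp only [Finset.mem_insert, Finset.mem_singleton] at hp
    rcases hp with rfl | rfl | rfl | rfl
    · exact Finset.mem_filter.mpr ⟨Finset.mem_offDiag.mpr ⟨he.1, hf.1, hef⟩, ⟨v, he.2, hf.2⟩⟩
    · exact Finset.mem_filter.mpr ⟨Finset.mem_offDiag.mpr ⟨hf.1, he.1, Ne.symm hef⟩, ⟨v, hf.2, he.2⟩⟩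
    · exact Finset.mem_filter.mpr ⟨Finset.mem_offDiag.mpr ⟨hg.1, hh.1, hgh⟩, ⟨w, hg.2, hh.2⟩⟩
    · exact Finset.mem_filter.mpr ⟨Finset.mem_offDiag.mpr ⟨hh.1, hg.1, Ne.symm hgh⟩, ⟨w, hh.2, hg.2⟩⟩
  have hne1 : ¬ (e = g ∧ f = h) := by
    rintro ⟨rfl, rfl⟩
    exact hef (key e f he.2 hg.2 hf.2 hh.2)
  have hne2 : ¬ (e = h ∧ f = g) := by
    rintro ⟨rfl, rfl⟩
    exact hef (key e f he.2 hh.2 hf.2 hg.2)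
  have hcard4 : ({(e, f), (f, e), (g, h), (h, g)} : Finset (Sym2 (Fin (m+3)) × Sym2 (Fin (m+3)))).card = 4 := by
    rw [Finset.card_insert_of_notMem, Finset.card_insert_of_notMem,
      Finset.card_insert_of_notMem, Finset.card_singleton]
    · simp only [Finset.mem_singleton, Prod.mk.injEq, not_and]
      intro h1 _; exact (hgh h1).elim
    · simp only [Finset.mem_insert, Finset.mem_singleton, Prod.mk.injEq, not_or, not_and]
      constructor
      · intro h1 h2; exact hne2 ⟨h2, h1⟩
      · intro h1 h2; exact hne1 ⟨h2, h1⟩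
    · simp only [Finset.mem_insert, Finset.mem_singleton, Prod.mk.injEq, not_or, not_and]
      refine ⟨fun h1 _ => hef h1, fun h1 h2 => hne1 ⟨h1, h2⟩, fun h1 h2 => hne2 ⟨h1, h2⟩⟩
  have := Finset.card_le_card hsub
  rw [hcard4, hcard] at this
  omega

lemma upper_bound (M : Finset (Sym2 (Fin (m+3))))
    (h : IsOneNearlyEdgeIndep (cycleGraph (m+3)) M) : M.card ≤ (m + 4) / 2 := by
  obtain ⟨hM, hcard'⟩ := h
  have hcard : ((M.offDiag.filter fun p => ShareVertex p.1 p.2)).card = 2 := by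
    convert hcard' using 3
  have hsum := sum_deg M hM
  set deg : Fin (m+3) → ℕ := fun v => (M.filter (fun e => v ∈ e)).card with hdeg
  have hA : (Finset.univ.filter (fun v : Fin (m+3) => 2 ≤ deg v)).card ≤ 1 := by
    rw [Finset.card_le_one]
    intro a ha b hb
    rw [Finset.mem_filter] at ha hb
    exact at_most_one_double M hcard a b ha.2 hb.2
  have hb : ∀ v : Fin (m+3), deg v ≤ 1 + if 2 ≤ deg v then 1 else 0 := by
    intro v
    by_cases h2 : 2 ≤ deg v
    · rw [if_pos h2]; exact deg_le_two M hM v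
    · rw [if_neg h2]; omega
  have hsum2 : ∑ v : Fin (m+3), deg v ≤ (m + 3) + 1 := by
    calc ∑ v : Fin (m+3), deg v ≤ ∑ v : Fin (m+3), (1 + if 2 ≤ deg v then 1 else 0) :=
          Finset.sum_le_sum (fun v _ => hb v)
      _ = (m + 3) + (Finset.univ.filter (fun v : Fin (m+3) => 2 ≤ deg v)).card := by
          rw [Finset.sum_add_distrib, Finset.sum_const, ← Finset.card_filter]
          simp
      _ ≤ (m + 3) + 1 := by omega
  rw [hsum] at hsum2
  omega

/-! ### Lower bound construction -/

/-- Predicate selecting the indices of the edges in the construction. -/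
def Sel (m : ℕ) (i : Fin (m+3)) : Prop := (i : ℕ) = 0 ∨ (Odd (i : ℕ) ∧ (i : ℕ) < m + 2)

/-- The extremal 1-nearly edge independent set. -/
noncomputable def Mset (m : ℕ) : Finset (Sym2 (Fin (m+3))) :=
  (Finset.univ.filter (Sel m)).image (cedge m)

lemma sel_zero : Sel m 0 := Or.inl (Fin.val_zero _)

lemma sel_one : Sel m 1 := by
  right
  rw [Fin.val_one]
  exact ⟨odd_one, by omega⟩

lemma sel_consec {i : Fin (m+3)} (h1 : Sel m i) (h2 : Sel m (i + 1)) : i = 0 := by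
  rcases h1 with h1 | ⟨hodd, hlt⟩
  · ext; simpa using h1
  · exfalso
    have hval : ((i + 1 : Fin (m+3)) : ℕ) = (i : ℕ) + 1 :=
      Fin.val_add_one_of_lt (by rw [Fin.lt_iff_val_lt_val, Fin.val_last]; omega)
    rcases h2 with h2 | ⟨hodd2, _⟩
    · omega
    · rw [hval] at hodd2
      obtain ⟨a, ha⟩ := hodd
      obtain ⟨b, hb⟩ := hodd2
      omega

lemma cedge_mem_Mset {i : Fin (m+3)} (h : Sel m i) : cedge m i ∈ Mset m :=
  Finset.mem_image.mpr ⟨i, Finset.mem_filter.mpr ⟨Finset.mem_univ _, h⟩, rfl⟩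

lemma zero_ne_one' : (0 : Fin (m+3)) ≠ 1 := by
  simp [Fin.ext_iff]

lemma Mset_filter_eq :
    ((Mset m).offDiag.filter fun p => ShareVertex p.1 p.2)
      = {(cedge m 0, cedge m 1), (cedge m 1, cedge m 0)} := by
  ext p
  simp only [Finset.mem_filter, Finset.mem_offDiag, Finset.mem_insert, Finset.mem_singleton]
  constructor
  · rintro ⟨⟨h1, h2, h12⟩, v, hv1, hv2⟩
    obtain ⟨i, hi, hpi⟩ := Finset.mem_image.mp h1
    obtain ⟨j, hj, hpj⟩ := Finset.mem_image.mp h2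
    rw [Finset.mem_filter] at hi hj
    have hij : i ≠ j := by
      rintro rfl
      exact h12 (hpi.symm.trans hpj)
    rw [← hpi] at hv1
    rw [← hpj] at hv2
    have hcases : j = i + 1 ∨ i = j + 1 := by
      rcases mem_cedge.mp hv1 with rfl | rfl
      · rcases mem_cedge.mp hv2 with h | h
        · exact absurd h hij
        · exact Or.inr h
      · rcases mem_cedge.mp hv2 with h | h
        · exact Or.inl h.symm
        · exact absurd (add_right_cancel h) hij
    rcases hcases with h | h
    · have hi0 : i = 0 := sel_consec hi.2 (h ▸ hj.2)
      left
      have hj1 : j = 1 := by rw [h, hi0, zero_add]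
      rw [Prod.ext_iff]
      exact ⟨by rw [← hpi, hi0], by rw [← hpj, hj1]⟩
    · have hj0 : j = 0 := sel_consec hj.2 (h ▸ hi.2)
      right
      have hi1 : i = 1 := by rw [h, hj0, zero_add]
      rw [Prod.ext_iff]
      exact ⟨by rw [← hpi, hi1], by rw [← hpj, hj0]⟩
  · have hmem0 := cedge_mem_Mset (sel_zero (m := m))
    have hmem1 := cedge_mem_Mset (sel_one (m := m))
    have hne : cedge m 0 ≠ cedge m 1 := fun h => zero_ne_one' (cedge_injective h)
    have hshare : ShareVertex (cedge m 0) (cedge m 1) :=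
      ⟨1, mem_cedge.mpr (Or.inr (zero_add 1).symm), mem_cedge.mpr (Or.inl rfl)⟩
    rintro (rfl | rfl)
    · exact ⟨⟨hmem0, hmem1, hne⟩, hshare⟩
    · obtain ⟨v, hv1, hv2⟩ := hshare
      exact ⟨⟨hmem1, hmem0, hne.symm⟩, v, hv2, hv1⟩

lemma card_odd_range (k : ℕ) : ((Finset.range k).filter (fun x => Odd x)).card = k / 2 := by
  induction k with
  | zero => simp
  | succ k ih =>
    rw [Finset.range_add_one, Finset.filter_insert]
    by_cases h : Odd k
    · rw [if_pos h, Finset.card_insert_of_notMem (by simp), ih]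
      obtain ⟨a, rfl⟩ := h
      omega
    · rw [if_neg h, ih]
      rw [Nat.not_odd_iff_even] at h
      obtain ⟨a, rfl⟩ := h
      omega

lemma Mset_card : (Mset m).card = (m + 4) / 2 := by
  rw [Mset, Finset.card_image_of_injective _ cedge_injective]
  have hbij : (Finset.univ.filter (Sel m)).card
      = ((Finset.range (m+3)).filter (fun x => x = 0 ∨ (Odd x ∧ x < m + 2))).card := by
    apply Finset.card_bij (fun (i : Fin (m+3)) _ => (i : ℕ))
    · intro i hi
      rw [Finset.mem_filter] at hi ⊢
      exact ⟨Finset.mem_range.mpr i.isLt, hi.2⟩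
    · intro a _ b _ hab
      exact Fin.val_injective hab
    · intro x hx
      rw [Finset.mem_filter, Finset.mem_range] at hx
      exact ⟨⟨x, hx.1⟩, Finset.mem_filter.mpr ⟨Finset.mem_univ _, hx.2⟩, rfl⟩
  rw [hbij]
  have heq : (Finset.range (m+3)).filter (fun x => x = 0 ∨ (Odd x ∧ x < m + 2))
      = insert 0 ((Finset.range (m+2)).filter (fun x => Odd x)) := by
    ext x
    simp only [Finset.mem_filter, Finset.mem_range, Finset.mem_insert]
    constructor
    · rintro ⟨_, rfl | ⟨h1, h2⟩⟩
      · exact Or.inl rfl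
      · exact Or.inr ⟨h2, h1⟩
    · rintro (rfl | ⟨h1, h2⟩)
      · exact ⟨by omega, Or.inl rfl⟩
      · exact ⟨by omega, Or.inr ⟨h2, h1⟩⟩
  rw [heq, Finset.card_insert_of_notMem (by simp [Nat.not_odd_iff_even]), card_odd_range]
  omega

lemma Mset_indep : IsOneNearlyEdgeIndep (cycleGraph (m+3)) (Mset m) := by
  constructor
  · intro e he
    rw [Finset.mem_coe, Mset, Finset.mem_image] at he
    obtain ⟨i, _, rfl⟩ := he
    exact cedge_mem_edgeSet i
  · have hne : (cedge m 0, cedge m 1) ≠ (cedge m 1, cedge m 0) := by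
      intro h
      have := congrArg Prod.fst h
      exact zero_ne_one' (cedge_injective this)
    have h3 : ((Mset m).offDiag.filter fun p => ShareVertex p.1 p.2).card = 2 := by
      rw [Mset_filter_eq, Finset.card_pair hne]
    convert h3 using 3

end CycleAux

theorem edgeAlpha1_cycleGraph {n : ℕ} (hn : 3 ≤ n) :
    edgeAlpha1 (SimpleGraph.cycleGraph n) = (n + 1) / 2 := by
  obtain ⟨m, rfl⟩ : ∃ m, n = m + 3 := ⟨n - 3, by omega⟩
  have hgoal : (m + 3 + 1) / 2 = (m + 4) / 2 := by omega
  rw [edgeAlpha1, hgoal]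
  have hmem : (m + 4) / 2 ∈ {k | ∃ M : Finset (Sym2 (Fin (m+3))),
      IsOneNearlyEdgeIndep (SimpleGraph.cycleGraph (m+3)) M ∧ M.card = k} :=
    ⟨CycleAux.Mset m, CycleAux.Mset_indep, CycleAux.Mset_card⟩
  have hub : ∀ k ∈ {k | ∃ M : Finset (Sym2 (Fin (m+3))),
      IsOneNearlyEdgeIndep (SimpleGraph.cycleGraph (m+3)) M ∧ M.card = k}, k ≤ (m + 4) / 2 := by
    rintro k ⟨M, hM, rfl⟩
    exact CycleAux.upper_bound M hM
  exact le_antisymm (csSup_le ⟨_, hmem⟩ hub) (le_csSup ⟨(m + 4) / 2, hub⟩ hmem)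
end

section
/- For n ≥ 2, the 1-nearly vertex independence number of the path P_n equals ⌊(n+2)/2⌋. -/
open scoped Classical

lemma path_upper {n : ℕ} (I : Finset (Fin n))
    (hI : IsOneNearlyVertexIndep (SimpleGraph.pathGraph n) I) : I.card ≤ (n + 2) / 2 := by
  unfold IsOneNearlyVertexIndep at hI
  rw [Finset.card_eq_two] at hI
  obtain ⟨p, q, hpq, hEq⟩ := hI
  have hEq' := Finset.ext_iff.mp hEq
  -- decompose p
  have hp : p = p ∨ p = q := Or.inl rfl
  have hp' := (hEq' p).mpr (by simpa using hp)
  obtain ⟨x, y⟩ := p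
  simp only [Finset.mem_filter, Finset.mem_offDiag, SimpleGraph.pathGraph_adj] at hp'
  obtain ⟨⟨hx, hy, hxyne⟩, hadj⟩ := hp'
  -- find the ordered adjacent pair (a, b) with a+1 = b
  obtain ⟨a, b, ha, hb, habne, hstep, hA⟩ :
      ∃ a b : Fin n, a ∈ I ∧ b ∈ I ∧ a ≠ b ∧ (a : ℕ) + 1 = (b : ℕ) ∧
        ((a, b) = (x, y) ∨ (b, a) = (x, y)) := by
    rcases hadj with h | h
    · exact ⟨x, y, hx, hy, hxyne, h, Or.inl rfl⟩
    · exact ⟨y, x, hy, hx, hxyne.symm, h, Or.inr rfl⟩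
  have hABne : ((a, b) : Fin n × Fin n) ≠ (b, a) := by
    intro h
    injection h with h1 h2
    exact habne h1
  -- both orderings are in {p, q}
  have hmemab : ((a, b) : Fin n × Fin n) = (x, y) ∨ (a, b) = q := by
    have h := hEq' (a, b)
    simp only [Finset.mem_filter, Finset.mem_offDiag, SimpleGraph.pathGraph_adj,
      Finset.mem_insert, Finset.mem_singleton] at h
    exact h.mp ⟨⟨ha, hb, habne⟩, Or.inl hstep⟩
  have hmemba : ((b, a) : Fin n × Fin n) = (x, y) ∨ (b, a) = q := by
    have h := hEq' (b, a)
    simp only [Finset.mem_filter, Finset.mem_offDiag, SimpleGraph.pathGraph_adj,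
      Finset.mem_insert, Finset.mem_singleton] at h
    exact h.mp ⟨⟨hb, ha, habne.symm⟩, Or.inr hstep⟩
  -- uniqueness: every element of {p, q} is (a,b) or (b,a)
  have huniq : ∀ r : Fin n × Fin n, r = (x, y) ∨ r = q → r = (a, b) ∨ r = (b, a) := by
    intro r hr
    rcases hmemab with h1 | h1 <;> rcases hmemba with h2 | h2 <;> rcases hr with rfl | rfl
    · exact absurd (h1.trans h2.symm) hABne
    · exact absurd (h1.trans h2.symm) hABne
    · exact Or.inl h1.symm
    · exact Or.inr h2.symm
    · exact Or.inr h2.symm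
    · exact Or.inl h1.symm
    · exact absurd (h1.trans h2.symm) hABne
    · exact absurd (h1.trans h2.symm) hABne
  -- injection into range ((n+2)/2)
  have hcard : I.card ≤ (Finset.range ((n + 2) / 2)).card := by
    apply Finset.card_le_card_of_injOn
      (fun v : Fin n => if (v : ℕ) ≤ (a : ℕ) then (v : ℕ) / 2 else ((v : ℕ) + 1) / 2)
    · intro v _
      simp only [Finset.coe_range, Set.mem_Iio, Finset.mem_coe, Finset.mem_range]
      have := v.isLt
      split <;> omega
    · have main : ∀ u v : Fin n, u ∈ I → v ∈ I → (u : ℕ) < (v : ℕ) →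
          (if (u : ℕ) ≤ (a : ℕ) then (u : ℕ) / 2 else ((u : ℕ) + 1) / 2) =
          (if (v : ℕ) ≤ (a : ℕ) then (v : ℕ) / 2 else ((v : ℕ) + 1) / 2) → False := by
        intro u v hu hv hlt hf
        have hsucc : (v : ℕ) = (u : ℕ) + 1 := by
          split at hf <;> split at hf <;> omega
        have hneuv : u ≠ v := fun h => by rw [h] at hlt; omega
        have hmem : ((u, v) : Fin n × Fin n) = (x, y) ∨ (u, v) = q := by
          have h := hEq' (u, v)
          simp only [Finset.mem_filter, Finset.mem_offDiag, SimpleGraph.pathGraph_adj,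
            Finset.mem_insert, Finset.mem_singleton] at h
          exact h.mp ⟨⟨hu, hv, hneuv⟩, Or.inl hsucc.symm⟩
        rcases huniq (u, v) hmem with h | h
        · injection h with h1 h2
          have e1 : (u : ℕ) = (a : ℕ) := congrArg Fin.val h1
          have e2 : (v : ℕ) = (b : ℕ) := congrArg Fin.val h2
          rw [if_pos (by omega), if_neg (by omega)] at hf
          omega
        · injection h with h1 h2
          have e1 : (u : ℕ) = (b : ℕ) := congrArg Fin.val h1
          have e2 : (v : ℕ) = (a : ℕ) := congrArg Fin.val h2
          omega
      intro u hu v hv hf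
      by_contra hnuv
      rcases Nat.lt_trichotomy (u : ℕ) (v : ℕ) with h | h | h
      · exact main u v hu hv h hf
      · exact hnuv (Fin.ext h)
      · exact main v u hv hu h hf.symm
  simpa using hcard

lemma odd_count {n : ℕ} :
    (Finset.univ.filter fun v : Fin n => (v : ℕ) % 2 = 1).card = n / 2 := by
  rw [← Finset.card_range (n / 2)]
  refine Finset.card_nbij (fun v => (v : ℕ) / 2) ?_ ?_ ?_
  · intro v hv
    simp only [Finset.mem_coe, Finset.mem_filter, Finset.mem_univ, true_and] at hv
    simp only [Finset.coe_range, Set.mem_Iio, Finset.mem_range]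
    have := v.isLt
    omega
  · intro u hu v hv h
    simp only [Finset.mem_coe, Finset.mem_filter, Finset.mem_univ, true_and] at hu hv
    simp only at h
    exact Fin.ext (by omega)
  · intro k hk
    simp only [Finset.coe_range, Set.mem_Iio, Finset.mem_range] at hk
    refine ⟨⟨2 * k + 1, by omega⟩, ?_, show (2 * k + 1) / 2 = k by omega⟩
    simp only [Finset.mem_coe, Finset.mem_filter, Finset.mem_univ, true_and]
    omega

lemma path_lower {n : ℕ} (hn : 2 ≤ n) :
    ∃ I : Finset (Fin n), IsOneNearlyVertexIndep (SimpleGraph.pathGraph n) I ∧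
      I.card = (n + 2) / 2 := by
  have h0 : 0 < n := by omega
  have h1 : 1 < n := by omega
  set z : Fin n := ⟨0, h0⟩ with hz
  set o : Fin n := ⟨1, h1⟩ with ho
  have hzv : (z : ℕ) = 0 := rfl
  have hov : (o : ℕ) = 1 := rfl
  set I : Finset (Fin n) := insert z (Finset.univ.filter fun v : Fin n => (v : ℕ) % 2 = 1)
    with hIdef
  have hmemI : ∀ v : Fin n, v ∈ I ↔ (v : ℕ) = 0 ∨ (v : ℕ) % 2 = 1 := by
    intro v
    simp only [hIdef, Finset.mem_insert, Finset.mem_filter, Finset.mem_univ, true_and]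
    constructor
    · rintro (rfl | h)
      · left; exact hzv
      · right; exact h
    · rintro (h | h)
      · left; exact Fin.ext (by omega)
      · right; exact h
  refine ⟨I, ?_, ?_⟩
  · unfold IsOneNearlyVertexIndep
    rw [Finset.card_eq_two]
    refine ⟨(z, o), (o, z), ?_, ?_⟩
    · intro h
      injection h with h1 h2
      have : (z : ℕ) = (o : ℕ) := congrArg Fin.val h1
      omega
    · ext ⟨u, v⟩
      simp only [Finset.mem_filter, Finset.mem_offDiag, SimpleGraph.pathGraph_adj,
        Finset.mem_insert, Finset.mem_singleton, Prod.mk.injEq]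
      constructor
      · rintro ⟨⟨hu, hv, hneuv⟩, hadj⟩
        have hu' := (hmemI u).mp hu
        have hv' := (hmemI v).mp hv
        have hne' : (u : ℕ) ≠ (v : ℕ) := fun h => hneuv (Fin.ext h)
        have hvals : ((u : ℕ) = 0 ∧ (v : ℕ) = 1) ∨ ((u : ℕ) = 1 ∧ (v : ℕ) = 0) := by omega
        rcases hvals with ⟨e1, e2⟩ | ⟨e1, e2⟩
        · exact Or.inl ⟨Fin.ext (by omega), Fin.ext (by omega)⟩
        · exact Or.inr ⟨Fin.ext (by omega), Fin.ext (by omega)⟩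
      · rintro (⟨rfl, rfl⟩ | ⟨rfl, rfl⟩)
        · refine ⟨⟨(hmemI z).mpr (Or.inl hzv), (hmemI o).mpr (Or.inr (by omega)),
            fun h => ?_⟩, Or.inl (by omega)⟩
          have : (z : ℕ) = (o : ℕ) := congrArg Fin.val h
          omega
        · refine ⟨⟨(hmemI o).mpr (Or.inr (by omega)), (hmemI z).mpr (Or.inl hzv),
            fun h => ?_⟩, Or.inr (by omega)⟩
          have : (o : ℕ) = (z : ℕ) := congrArg Fin.val h
          omega
  · have hznot : (⟨0, h0⟩ : Fin n) ∉
        Finset.univ.filter fun v : Fin n => (v : ℕ) % 2 = 1 := by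
      simp only [Finset.mem_filter, Finset.mem_univ, true_and]
      intro h
      have h' : (0 : ℕ) % 2 = 1 := h
      omega
    rw [hIdef, hz, Finset.card_insert_of_notMem hznot, odd_count]
    omega

theorem vertexAlpha1_pathGraph {n : ℕ} (hn : 2 ≤ n) :
    vertexAlpha1 (SimpleGraph.pathGraph n) = (n + 2) / 2 := by
  obtain ⟨I₀, hI₀, hc₀⟩ := path_lower hn
  have hmem : (n + 2) / 2 ∈ {k | ∃ I : Finset (Fin n),
      IsOneNearlyVertexIndep (SimpleGraph.pathGraph n) I ∧ I.card = k} := ⟨I₀, hI₀, hc₀⟩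
  have hub : ∀ k ∈ {k | ∃ I : Finset (Fin n),
      IsOneNearlyVertexIndep (SimpleGraph.pathGraph n) I ∧ I.card = k}, k ≤ (n + 2) / 2 := by
    rintro k ⟨I, hI, rfl⟩
    exact path_upper I hI
  exact le_antisymm (csSup_le ⟨_, hmem⟩ hub) (le_csSup ⟨_, hub⟩ hmem)
end

section
/- If G is a finite simple graph on n vertices, then α'₁(G) ≤ ⌊(n+1)/2⌋. -/
open scoped Classical

/-- The endpoints of an unordered pair, as a finset. -/
noncomputable def endFinset {V : Type*} (e : Sym2 V) : Finset V := {e.out.1, e.out.2}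

lemma mem_endFinset {V : Type*} {v : V} {e : Sym2 V} : v ∈ endFinset e ↔ v ∈ e := by
  have he : Sym2.mk e.out.1 e.out.2 = e := Quot.out_eq e
  constructor
  · intro h
    rcases Finset.mem_insert.1 h with h | h
    · exact h ▸ e.out_fst_mem
    · exact (Finset.mem_singleton.1 h) ▸ e.out_snd_mem
  · intro h
    rw [← he] at h
    rcases Sym2.mem_iff.1 h with h | h
    · simp only [endFinset, Finset.mem_insert]; left; rw [h]
    · simp only [endFinset, Finset.mem_insert, Finset.mem_singleton]; right; rw [h]

lemma card_endFinset {V : Type*} {e : Sym2 V} (h : ¬ e.IsDiag) : (endFinset e).card = 2 := by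
  have he : Sym2.mk e.out.1 e.out.2 = e := Quot.out_eq e
  have : e.out.1 ≠ e.out.2 := by
    intro hh
    apply h
    rw [← he]
    exact Sym2.mk_isDiag_iff.2 hh
  exact Finset.card_pair this

lemma key {V : Type*} [Fintype V] (G : SimpleGraph V) (M : Finset (Sym2 V))
    (h : IsOneNearlyEdgeIndep G M) : 2 * M.card ≤ Fintype.card V + 1 := by
  obtain ⟨hsub, hcard⟩ := h
  set F := M.offDiag.filter fun p => ShareVertex p.1 p.2 with hF
  -- get the unique sharing pair
  obtain ⟨p, hp⟩ : F.Nonempty := Finset.card_pos.1 (by rw [hcard]; norm_num)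
  obtain ⟨e₀, f₀⟩ := p
  simp only [hF, Finset.mem_filter, Finset.mem_offDiag] at hp
  obtain ⟨⟨he₀M, hf₀M, hne⟩, hshare⟩ := hp
  -- the reversed pair is also in F
  have hrev : ((f₀, e₀) : Sym2 V × Sym2 V) ∈ F := by
    simp only [hF, Finset.mem_filter, Finset.mem_offDiag]
    obtain ⟨v, hv1, hv2⟩ := hshare
    exact ⟨⟨hf₀M, he₀M, hne.symm⟩, v, hv2, hv1⟩
  have hfwd : ((e₀, f₀) : Sym2 V × Sym2 V) ∈ F := by
    simp only [hF, Finset.mem_filter, Finset.mem_offDiag]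
    exact ⟨⟨he₀M, hf₀M, hne⟩, hshare⟩
  have hFeq : F = {((e₀, f₀) : Sym2 V × Sym2 V), (f₀, e₀)} := by
    symm
    apply Finset.eq_of_subset_of_card_le
    · intro x hx
      rcases Finset.mem_insert.1 hx with h | h
      · exact h ▸ hfwd
      · exact (Finset.mem_singleton.1 h) ▸ hrev
    · rw [hcard, Finset.card_insert_of_notMem, Finset.card_singleton]
      simp only [Finset.mem_singleton, Prod.mk.injEq]
      intro ⟨h1, _⟩
      exact hne h1
  -- the only sharing pair is {e₀, f₀}
  have hP : ∀ a ∈ M, ∀ b ∈ M, a ≠ b → ShareVertex a b →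
      (a = e₀ ∧ b = f₀) ∨ (a = f₀ ∧ b = e₀) := by
    intro a ha b hb hab hs
    have : ((a, b) : Sym2 V × Sym2 V) ∈ F := by
      simp only [hF, Finset.mem_filter, Finset.mem_offDiag]
      exact ⟨⟨ha, hb, hab⟩, hs⟩
    rw [hFeq] at this
    rcases Finset.mem_insert.1 this with h | h
    · left; exact Prod.mk.injEq .. ▸ (Prod.mk.inj h)
    · right; exact Prod.mk.inj (Finset.mem_singleton.1 h)
  -- edges are non-diagonal
  have hnd : ∀ e ∈ M, ¬ e.IsDiag := fun e he => G.not_isDiag_of_mem_edgeSet (hsub he)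
  -- edges in M.erase e₀ are pairwise disjoint
  have hdisj : ∀ a ∈ M.erase e₀, ∀ b ∈ M.erase e₀, a ≠ b →
      Disjoint (endFinset a) (endFinset b) := by
    intro a ha b hb hab
    rw [Finset.mem_erase] at ha hb
    rw [Finset.disjoint_left]
    intro v hva hvb
    have hs : ShareVertex a b := ⟨v, mem_endFinset.1 hva, mem_endFinset.1 hvb⟩
    rcases hP a ha.2 b hb.2 hab hs with ⟨h1, _⟩ | ⟨_, h2⟩
    · exact ha.1 h1
    · exact hb.1 h2
  set N := (M.erase e₀).biUnion endFinset with hN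
  have hNcard : N.card = 2 * (M.card - 1) := by
    rw [hN, Finset.card_biUnion hdisj]
    rw [Finset.sum_congr rfl (fun e he => card_endFinset (hnd e (Finset.mem_of_mem_erase he)))]
    rw [Finset.sum_const, smul_eq_mul, Finset.card_erase_of_mem he₀M]
    ring
  -- the shared vertex and the other endpoint of e₀
  obtain ⟨v, hv1, hv2⟩ := hshare
  set u := Sym2.Mem.other hv1 with hu
  have hue : u ∈ e₀ := Sym2.other_mem hv1
  have huv : u ≠ v := by
    intro huv
    apply hnd e₀ he₀M
    rw [← Sym2.other_spec hv1, ← hu, huv]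
    exact Sym2.mk_isDiag_iff.2 rfl
  -- u is not in N
  have huN : u ∉ N := by
    intro huN
    rw [hN, Finset.mem_biUnion] at huN
    obtain ⟨g, hg, hug⟩ := huN
    rw [Finset.mem_erase] at hg
    have hs : ShareVertex e₀ g := ⟨u, hue, mem_endFinset.1 hug⟩
    rcases hP e₀ he₀M g hg.2 (Ne.symm hg.1) hs with ⟨_, hgf⟩ | ⟨hef, _⟩
    · -- g = f₀ : then u, v both in e₀ and f₀, u ≠ v, so e₀ = f₀
      apply hne
      exact Sym2.eq_of_ne_mem huv hue hv1 (hgf ▸ mem_endFinset.1 hug) hv2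
    · exact hne hef
  have hcard2 : 2 ≤ M.card := by
    have : ({e₀, f₀} : Finset (Sym2 V)) ⊆ M := by
      intro x hx
      rcases Finset.mem_insert.1 hx with h | h
      · exact h ▸ he₀M
      · exact (Finset.mem_singleton.1 h) ▸ hf₀M
    calc 2 = ({e₀, f₀} : Finset (Sym2 V)).card := (Finset.card_pair hne).symm
    _ ≤ M.card := Finset.card_le_card this
  have hins : (insert u N).card ≤ Fintype.card V := by
    apply le_trans (Finset.card_le_card (Finset.subset_univ _)) (le_of_eq (Finset.card_univ))
  rw [Finset.card_insert_of_notMem huN, hNcard] at hins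
  omega

theorem edgeAlpha1_le {V : Type*} [Fintype V] (G : SimpleGraph V) :
    edgeAlpha1 G ≤ (Fintype.card V + 1) / 2 := by
  apply csSup_le'
  rintro k ⟨M, hM, rfl⟩
  rw [Nat.le_div_iff_mul_le (by norm_num)]
  rw [mul_comm]
  exact key G M hM
end

section
/- A graph G on n vertices satisfies α'₁(G) = ⌊(n+1)/2⌋ if and only if G contains a spanning subgraph isomorphic to P₃ ∪ ((n−3)/2)K₂ when n is odd, or to P₃ ∪ ((n−4)/2)K₂ ∪ K₁ when n is even (n ≥ 3, resp. n ≥ 4). -/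
open scoped Classical

/-- The forest `P₃ ∪ ⌊(n-3)/2⌋ K₂ (∪ K₁ if n is even)` on `Fin n`:
vertices `0,1,2` form a path `0-1-2`, and vertices `3,4`, `5,6`, ... are paired
into independent edges (with the last vertex isolated when `n` is even). -/
def faithfulForest (n : ℕ) : SimpleGraph (Fin n) where
  Adj a b := a ≠ b ∧ ((a.val ≤ 2 ∧ b.val ≤ 2 ∧ (a.val = 1 ∨ b.val = 1)) ∨
    (3 ≤ a.val ∧ 3 ≤ b.val ∧ (a.val + 1) / 2 = (b.val + 1) / 2))
  symm := ⟨fun a b ⟨h1, h2⟩ => ⟨h1.symm, by omega⟩⟩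
  loopless := ⟨fun a h => h.1 rfl⟩


noncomputable def efst {V : Type*} (g : Sym2 V) : V := (Quot.out g).1
noncomputable def esnd {V : Type*} (g : Sym2 V) : V := (Quot.out g).2

lemma mk_eq {V : Type*} (g : Sym2 V) : s(efst g, esnd g) = g := by
  conv_rhs => rw [← Quot.out_eq g]
  rfl

lemma efst_mem {V : Type*} (g : Sym2 V) : efst g ∈ g := Sym2.out_fst_mem g
lemma esnd_mem {V : Type*} (g : Sym2 V) : esnd g ∈ g := Sym2.out_snd_mem g

section
variable {V : Type*} {G : SimpleGraph V} (a v b : V) (M' : Finset (Sym2 V))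

lemma S_card (hav : G.Adj a v) (hbv : G.Adj b v) (hab : a ≠ b)
    (hsub : ∀ g ∈ M', g ∈ G.edgeSet)
    (hdisj : ∀ g ∈ M', ¬ ShareVertex s(a,v) g ∧ ¬ ShareVertex s(b,v) g)
    (hpair : ∀ g g', g ∈ M' → g' ∈ M' → g ≠ g' → ¬ ShareVertex g g') :
    (({a,v,b} : Finset V) ∪ M'.biUnion (fun g => {efst g, esnd g})).card = 3 + 2 * M'.card := by
  have hmem2 : ∀ g ∈ M', ∀ x : V, x ∈ ({efst g, esnd g} : Finset V) → x ∈ g := by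
    intro g hg x hx
    rcases Finset.mem_insert.1 hx with h | h
    · exact h ▸ efst_mem g
    · exact (Finset.mem_singleton.1 h) ▸ esnd_mem g
  have hdisj1 : Disjoint ({a,v,b} : Finset V) (M'.biUnion (fun g => {efst g, esnd g})) := by
    rw [Finset.disjoint_left]
    intro x hx hx'
    obtain ⟨g, hg, hxg⟩ := Finset.mem_biUnion.1 hx'
    have hxg' : x ∈ g := hmem2 g hg x hxg
    rcases Finset.mem_insert.1 hx with h | h
    · exact (hdisj g hg).1 ⟨x, by rw [h]; exact Sym2.mem_iff.2 (Or.inl rfl), hxg'⟩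
    rcases Finset.mem_insert.1 h with h | h
    · exact (hdisj g hg).1 ⟨x, by rw [h]; exact Sym2.mem_iff.2 (Or.inr rfl), hxg'⟩
    · have := Finset.mem_singleton.1 h
      exact (hdisj g hg).2 ⟨x, by rw [this]; exact Sym2.mem_iff.2 (Or.inl rfl), hxg'⟩
  have hbi : (M'.biUnion (fun g => {efst g, esnd g})).card = 2 * M'.card := by
    rw [Finset.card_biUnion]
    · rw [Finset.sum_congr rfl (g := fun _ => 2), Finset.sum_const, smul_eq_mul, mul_comm]
      intro g hg
      have hne : efst g ≠ esnd g := by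
        intro hEq
        have := G.not_isDiag_of_mem_edgeSet (hsub g hg)
        rw [← mk_eq g] at this
        exact this (Sym2.mk_isDiag_iff.2 hEq)
      rw [Finset.card_insert_of_notMem (by simpa using hne), Finset.card_singleton]
    · intro g hg g' hg' hgg
      rw [Function.onFun, Finset.disjoint_left]
      intro x hx hx'
      exact hpair g g' hg hg' hgg ⟨x, hmem2 g hg x hx, hmem2 g' hg' x hx'⟩
  have h3 : ({a,v,b} : Finset V).card = 3 := by
    have hav' : a ≠ v := hav.ne
    have hbv' : b ≠ v := hbv.ne
    rw [Finset.card_insert_of_notMem (by simp [hav', hab]),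
      Finset.card_insert_of_notMem (by simp [hbv'.symm]), Finset.card_singleton]
  rw [Finset.card_union_of_disjoint hdisj1, hbi, h3]

end

lemma unique_pair {V : Type*} {G : SimpleGraph V} {M : Finset (Sym2 V)}
    (h : IsOneNearlyEdgeIndep G M) :
    ∃ e₀ f₀, e₀ ∈ M ∧ f₀ ∈ M ∧ e₀ ≠ f₀ ∧ ShareVertex e₀ f₀ ∧
      ∀ p q, p ∈ M → q ∈ M → p ≠ q → ShareVertex p q →
        (p = e₀ ∧ q = f₀) ∨ (p = f₀ ∧ q = e₀) := by
  obtain ⟨hsub, hcard⟩ := h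
  obtain ⟨x, y, hxy, hset⟩ := Finset.card_eq_two.1 hcard
  have hx : x ∈ M.offDiag.filter fun p => ShareVertex p.1 p.2 := by
    rw [hset]; exact Finset.mem_insert_self _ _
  have hx' := Finset.mem_filter.1 hx
  have hxo := Finset.mem_offDiag.1 hx'.1
  have hswap : (x.2, x.1) ∈ M.offDiag.filter fun p => ShareVertex p.1 p.2 := by
    refine Finset.mem_filter.2 ⟨Finset.mem_offDiag.2 ⟨hxo.2.1, hxo.1, (Ne.symm hxo.2.2)⟩, ?_⟩
    obtain ⟨v, hv1, hv2⟩ := hx'.2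
    exact ⟨v, hv2, hv1⟩
  have hswap_ne : (x.2, x.1) ≠ x := fun hEq => hxo.2.2 (congrArg Prod.fst hEq).symm
  have hy : y = (x.2, x.1) := by
    rw [hset] at hswap
    rcases Finset.mem_insert.1 hswap with h1 | h1
    · exact absurd h1 hswap_ne
    · exact (Finset.mem_singleton.1 h1).symm
  refine ⟨x.1, x.2, hxo.1, hxo.2.1, hxo.2.2, hx'.2, ?_⟩
  intro p q hp hq hpq hsh
  have : (p, q) ∈ M.offDiag.filter fun p => ShareVertex p.1 p.2 := by
    exact Finset.mem_filter.2 ⟨Finset.mem_offDiag.2 ⟨hp, hq, hpq⟩, hsh⟩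
  rw [hset, hy] at this
  rcases Finset.mem_insert.1 this with h1 | h1
  · left; exact ⟨congrArg Prod.fst h1, congrArg Prod.snd h1⟩
  · right
    have := Finset.mem_singleton.1 h1
    exact ⟨congrArg Prod.fst this, congrArg Prod.snd this⟩

lemma decomp {V : Type*} {G : SimpleGraph V} {M : Finset (Sym2 V)}
    (h : IsOneNearlyEdgeIndep G M) :
    ∃ (a v b : V) (M' : Finset (Sym2 V)),
      G.Adj a v ∧ G.Adj b v ∧ a ≠ b ∧
      M = insert s(a,v) (insert s(b,v) M') ∧
      s(a,v) ∉ insert s(b,v) M' ∧ s(b,v) ∉ M' ∧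
      (∀ g ∈ M', g ∈ G.edgeSet) ∧
      (∀ g ∈ M', ¬ ShareVertex s(a,v) g ∧ ¬ ShareVertex s(b,v) g) ∧
      (∀ g g', g ∈ M' → g' ∈ M' → g ≠ g' → ¬ ShareVertex g g') := by
  obtain ⟨e₀, f₀, he₀, hf₀, hne, ⟨v, hv1, hv2⟩, huniq⟩ := unique_pair h
  obtain ⟨a, ha⟩ := Sym2.mem_iff_exists.1 hv1
  obtain ⟨b, hb⟩ := Sym2.mem_iff_exists.1 hv2
  have hadj_a : G.Adj v a := G.mem_edgeSet.1 (ha ▸ h.1 he₀)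
  have hadj_b : G.Adj v b := G.mem_edgeSet.1 (hb ▸ h.1 hf₀)
  have hab : a ≠ b := by
    intro hEq; apply hne; rw [ha, hb, hEq]
  have hef : s(a,v) = e₀ := by rw [ha, Sym2.eq_swap]
  have hff : s(b,v) = f₀ := by rw [hb, Sym2.eq_swap]
  refine ⟨a, v, b, (M.erase e₀).erase f₀, hadj_a.symm, hadj_b.symm, hab, ?_, ?_, ?_, ?_, ?_, ?_⟩
  · rw [hef, hff]
    rw [Finset.insert_erase (Finset.mem_erase.2 ⟨Ne.symm hne, hf₀⟩), Finset.insert_erase he₀]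
  · rw [hef, hff]
    intro hmem
    rcases Finset.mem_insert.1 hmem with h1 | h1
    · exact hne h1
    · exact (Finset.mem_erase.1 (Finset.mem_erase.1 h1).2).1 rfl
  · rw [hff]; exact fun h1 => (Finset.mem_erase.1 h1).1 rfl
  · intro g hg
    exact h.1 (Finset.mem_erase.1 (Finset.mem_erase.1 hg).2).2
  · intro g hg
    have hgM : g ∈ M := (Finset.mem_erase.1 (Finset.mem_erase.1 hg).2).2
    have hgf : g ≠ f₀ := (Finset.mem_erase.1 hg).1
    have hge : g ≠ e₀ := (Finset.mem_erase.1 (Finset.mem_erase.1 hg).2).1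
    constructor
    · rw [hef]; intro hsh
      rcases huniq e₀ g he₀ hgM (Ne.symm hge) hsh with ⟨_, h2⟩ | ⟨h1, _⟩
      · exact hgf h2
      · exact hne h1
    · rw [hff]; intro hsh
      rcases huniq f₀ g hf₀ hgM (Ne.symm hgf) hsh with ⟨h1, h2⟩ | ⟨_, h2⟩
      · exact hne h1.symm
      · exact hge h2
  · intro g g' hg hg' hgg hsh
    have hgM : g ∈ M := (Finset.mem_erase.1 (Finset.mem_erase.1 hg).2).2
    have hgM' : g' ∈ M := (Finset.mem_erase.1 (Finset.mem_erase.1 hg').2).2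
    rcases huniq g g' hgM hgM' hgg hsh with ⟨h1, _⟩ | ⟨h1, _⟩
    · exact (Finset.mem_erase.1 (Finset.mem_erase.1 hg).2).1 h1
    · exact (Finset.mem_erase.1 hg).1 h1

def buildF {V : Type*} {m : ℕ} (a v b w : V) (P : Fin m → V × V) (i : ℕ) : V :=
  if i = 0 then a else if i = 1 then v else if i = 2 then b
  else if h : 3 ≤ i ∧ i < 2*m+3 then
    (if (i-3) % 2 = 0 then (P ⟨(i-3)/2, by omega⟩).1 else (P ⟨(i-3)/2, by omega⟩).2)
  else w

section
variable {V : Type*} {m : ℕ} (a v b w : V) (P : Fin m → V × V)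

lemma buildF_0 : buildF a v b w P 0 = a := rfl
lemma buildF_1 : buildF a v b w P 1 = v := rfl
lemma buildF_2 : buildF a v b w P 2 = b := rfl

lemma buildF_fst (k : ℕ) (hk : k < m) : buildF a v b w P (2*k+3) = (P ⟨k, hk⟩).1 := by
  unfold buildF
  rw [if_neg (by omega), if_neg (by omega), if_neg (by omega), dif_pos (by omega),
    if_pos (by omega)]
  have : (⟨(2*k+3-3)/2, by omega⟩ : Fin m) = ⟨k, hk⟩ := Fin.mk_eq_mk.2 (by omega)
  rw [this]

lemma buildF_snd (k : ℕ) (hk : k < m) : buildF a v b w P (2*k+4) = (P ⟨k, hk⟩).2 := by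
  unfold buildF
  rw [if_neg (by omega), if_neg (by omega), if_neg (by omega), dif_pos (by omega),
    if_neg (by omega)]
  have : (⟨(2*k+4-3)/2, by omega⟩ : Fin m) = ⟨k, hk⟩ := Fin.mk_eq_mk.2 (by omega)
  rw [this]

lemma buildF_last (i : ℕ) (hi : 2*m+3 ≤ i) : buildF a v b w P i = w := by
  unfold buildF
  rw [if_neg (by omega), if_neg (by omega), if_neg (by omega), dif_neg (by omega)]

end

lemma forward {V : Type*} [Fintype V] {G : SimpleGraph V} {n : ℕ} (hn : 3 ≤ n)
    (hc : Fintype.card V = n) {M : Finset (Sym2 V)} (h : IsOneNearlyEdgeIndep G M)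
    (hcard : M.card = (n+1)/2) :
    ∃ e : V ≃ Fin n, ∀ a b : V, (faithfulForest n).Adj (e a) (e b) → G.Adj a b := by
  obtain ⟨a, v, b, M', hav, hbv, hab, hMeq, hni1, hni2, hsub, hdisj, hpair⟩ := decomp h
  set m := M'.card with hm
  have hM2 : M.card = m + 2 := by
    rw [hMeq, Finset.card_insert_of_notMem hni1, Finset.card_insert_of_notMem hni2]
  have hn2 : n = 2*m+3 ∨ n = 2*m+4 := by omega
  set S : Finset V := ({a,v,b} : Finset V) ∪ M'.biUnion (fun g => {efst g, esnd g}) with hSdef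
  have hS : S.card = 3 + 2*m := S_card a v b M' hav hbv hab hsub hdisj hpair
  set T : Finset V := Sᶜ with hTdef
  have hT : T.card = n - (3 + 2*m) := by rw [hTdef, Finset.card_compl, hS, hc]
  set w : V := if hT' : T.Nonempty then hT'.choose else a with hwdef
  set eqv := M'.equivFin with heqv
  set P : Fin m → V × V := fun k => (efst (eqv.symm k).1, esnd (eqv.symm k).1) with hP
  set F : Fin n → V := fun i => buildF a v b w P i.val with hF
  have hsurj : Function.Surjective F := by
    intro x
    by_cases hxS : x ∈ S
    · rw [hSdef] at hxS
      rcases Finset.mem_union.1 hxS with hx | hx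
      · rcases Finset.mem_insert.1 hx with h0 | hx
        · exact ⟨⟨0, by omega⟩, by rw [hF]; simpa [buildF_0] using h0.symm⟩
        rcases Finset.mem_insert.1 hx with h0 | hx
        · exact ⟨⟨1, by omega⟩, by rw [hF]; simpa [buildF_1] using h0.symm⟩
        · have h0 := Finset.mem_singleton.1 hx
          exact ⟨⟨2, by omega⟩, by rw [hF]; simpa [buildF_2] using h0.symm⟩
      · obtain ⟨g, hg, hxg⟩ := Finset.mem_biUnion.1 hx
        set k := eqv ⟨g, hg⟩ with hk
        have hkm : (k : ℕ) < m := k.2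
        have hsymm : eqv.symm ⟨(k : ℕ), hkm⟩ = ⟨g, hg⟩ := by
          rw [show (⟨(k : ℕ), hkm⟩ : Fin m) = k from Fin.ext rfl, hk, Equiv.symm_apply_apply]
        rcases Finset.mem_insert.1 hxg with h0 | hxg
        · refine ⟨⟨2*(k:ℕ)+3, by omega⟩, ?_⟩
          rw [hF]
          show buildF a v b w P (2*(k:ℕ)+3) = x
          rw [buildF_fst a v b w P (k:ℕ) hkm, hP]
          simp only [hsymm]
          exact h0.symm
        · have h0 := Finset.mem_singleton.1 hxg
          refine ⟨⟨2*(k:ℕ)+4, by omega⟩, ?_⟩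
          rw [hF]
          show buildF a v b w P (2*(k:ℕ)+4) = x
          rw [buildF_snd a v b w P (k:ℕ) hkm, hP]
          simp only [hsymm]
          exact h0.symm
    · have hxT : x ∈ T := by rw [hTdef]; exact Finset.mem_compl.2 hxS
      have hT' : T.Nonempty := ⟨x, hxT⟩
      have hwT : w ∈ T := by rw [hwdef, dif_pos hT']; exact hT'.choose_spec
      have hn4 : n = 2*m+4 := by
        have := Finset.card_pos.2 hT'
        omega
      have hT1 : T.card ≤ 1 := by omega
      have hxw : x = w := Finset.card_le_one.1 hT1 x hxT w hwT
      refine ⟨⟨2*m+3, by omega⟩, ?_⟩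
      rw [hF]
      show buildF a v b w P (2*m+3) = x
      rw [buildF_last a v b w P _ le_rfl, hxw]
  have hbij : Function.Bijective F :=
    (Fintype.bijective_iff_surjective_and_card F).2 ⟨hsurj, by simp [hc]⟩
  set E := Equiv.ofBijective F hbij with hE
  refine ⟨E.symm, ?_⟩
  intro x y hadj
  have hx : F (E.symm x) = x := E.apply_symm_apply x
  have hy : F (E.symm y) = y := E.apply_symm_apply y
  rw [← hx, ← hy]
  set i := E.symm x
  set j := E.symm y
  obtain ⟨hne, hcase⟩ := hadj
  have hne' : (i : ℕ) ≠ (j : ℕ) := fun hEq => hne (Fin.ext hEq)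
  have hiv : (i : ℕ) < n := i.2
  have hjv : (j : ℕ) < n := j.2
  rcases hcase with ⟨hi2, hj2, h1⟩ | ⟨hi3, hj3, heq⟩
  · have : ((i:ℕ) = 0 ∧ (j:ℕ) = 1) ∨ ((i:ℕ) = 1 ∧ (j:ℕ) = 0) ∨
      ((i:ℕ) = 1 ∧ (j:ℕ) = 2) ∨ ((i:ℕ) = 2 ∧ (j:ℕ) = 1) := by omega
    rcases this with ⟨ha', hb'⟩ | ⟨ha', hb'⟩ | ⟨ha', hb'⟩ | ⟨ha', hb'⟩ <;>
      rw [hF] <;>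
      simp only [ha', hb', buildF_0, buildF_1, buildF_2]
    · exact hav
    · exact hav.symm
    · exact hbv.symm
    · exact hbv
  · have hbound : (i:ℕ) < 2*m+3 ∧ (j:ℕ) < 2*m+3 := by omega
    have hcons : ((j:ℕ) = (i:ℕ) + 1 ∧ ((i:ℕ) - 3) % 2 = 0) ∨
        ((i:ℕ) = (j:ℕ) + 1 ∧ ((j:ℕ) - 3) % 2 = 0) := by omega
    have key : ∀ k : ℕ, ∀ hk : k < m, G.Adj (P ⟨k, hk⟩).1 (P ⟨k, hk⟩).2 := by
      intro k hk
      have hgM : (eqv.symm ⟨k, hk⟩).1 ∈ M' := (eqv.symm ⟨k, hk⟩).2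
      have := hsub _ hgM
      rw [← mk_eq (eqv.symm ⟨k, hk⟩).1, SimpleGraph.mem_edgeSet] at this
      exact this
    rcases hcons with ⟨hji, hpar⟩ | ⟨hij, hpar⟩
    · set k := ((i:ℕ) - 3)/2 with hkdef
      have hkm : k < m := by omega
      rw [hF]
      simp only []
      rw [show (i:ℕ) = 2*k+3 by omega, show (j:ℕ) = 2*k+4 by omega,
        buildF_fst a v b w P k hkm, buildF_snd a v b w P k hkm]
      exact key k hkm
    · set k := ((j:ℕ) - 3)/2 with hkdef
      have hkm : k < m := by omega
      rw [hF]
      simp only []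
      rw [show (i:ℕ) = 2*k+4 by omega, show (j:ℕ) = 2*k+3 by omega,
        buildF_snd a v b w P k hkm, buildF_fst a v b w P k hkm]
      exact (key k hkm).symm

def iidx (k : ℕ) : ℕ := 2*k - 1
def jidx (k : ℕ) : ℕ := if k = 0 then 1 else 2*k

lemma jidx_spec (k : ℕ) : (k = 0 ∧ jidx k = 1) ∨ (1 ≤ k ∧ jidx k = 2*k) := by
  by_cases h : k = 0 <;> simp [jidx, h]; omega

lemma backward {V : Type*} [Fintype V] {G : SimpleGraph V} {n : ℕ} (hn : 3 ≤ n)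
    (hc : Fintype.card V = n) (e : V ≃ Fin n)
    (he : ∀ a b : V, (faithfulForest n).Adj (e a) (e b) → G.Adj a b) :
    ∃ M : Finset (Sym2 V), IsOneNearlyEdgeIndep G M ∧ M.card = (n+1)/2 := by
  set K := (n+1)/2 with hK
  have hnpos : 0 < n := by omega
  set ι : ℕ → Fin n := fun t => ⟨t % n, Nat.mod_lt t hnpos⟩ with hι
  have hιval : ∀ t, t < n → (ι t : ℕ) = t := fun t ht => Nat.mod_eq_of_lt ht
  set gg : ℕ → Sym2 V := fun k => s(e.symm (ι (iidx k)), e.symm (ι (jidx k))) with hgg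
  have hbnd : ∀ k, k < K → iidx k < jidx k ∧ jidx k < n := by
    intro k hk
    rcases jidx_spec k with ⟨h0, hj⟩ | ⟨h1, hj⟩
    · subst h0; rw [hj]; unfold iidx; omega
    · rw [hj]; unfold iidx; omega
  have hinjι : ∀ t t', t < n → t' < n → e.symm (ι t) = e.symm (ι t') → t = t' := by
    intro t t' ht ht' hEq
    have := e.symm.injective hEq
    have := congrArg Fin.val this
    rwa [hιval t ht, hιval t' ht'] at this
  have hGadj : ∀ k, k < K → G.Adj (e.symm (ι (iidx k))) (e.symm (ι (jidx k))) := by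
    intro k hk
    obtain ⟨hlt, hjn⟩ := hbnd k hk
    have hin : iidx k < n := lt_trans hlt hjn
    apply he
    rw [Equiv.apply_symm_apply, Equiv.apply_symm_apply]
    refine ⟨fun hEq => ?_, ?_⟩
    · have := congrArg Fin.val hEq
      rw [hιval _ hin, hιval _ hjn] at this
      omega
    · rw [hιval _ hin, hιval _ hjn]
      rcases jidx_spec k with ⟨h0, hj⟩ | ⟨h1, hj⟩
      · subst h0; rw [hj]; left; unfold iidx; omega
      · rw [hj]
        by_cases h1' : k = 1
        · subst h1'; left; unfold iidx; omega
        · right; unfold iidx; omega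
  have hmemgg : ∀ k x, x ∈ gg k ↔ x = e.symm (ι (iidx k)) ∨ x = e.symm (ι (jidx k)) := by
    intro k x; rw [hgg]; exact Sym2.mem_iff
  have hinj : Set.InjOn gg (Finset.range K) := by
    intro k hk k' hk' hEq
    rw [Finset.coe_range, Set.mem_Iio] at hk hk'
    obtain ⟨hlt, hjn⟩ := hbnd k hk
    obtain ⟨hlt', hjn'⟩ := hbnd k' hk'
    have hin : iidx k < n := lt_trans hlt hjn
    have hin' : iidx k' < n := lt_trans hlt' hjn'
    rw [hgg] at hEq
    simp only [Sym2.eq_iff] at hEq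
    have hidx : iidx k = iidx k' := by
      rcases hEq with ⟨h1, h2⟩ | ⟨h1, h2⟩
      · exact hinjι _ _ hin hin' h1
      · have e1 := hinjι _ _ hin hjn' h1
        have e2 := hinjι _ _ hjn hin' h2
        omega
    rcases jidx_spec k with ⟨h0, hj⟩ | ⟨h1, hj⟩ <;>
      rcases jidx_spec k' with ⟨h0', hj'⟩ | ⟨h1', hj'⟩ <;>
      unfold iidx at hidx <;> omega
  have hshare : ∀ k k', k < K → k' < K → k ≠ k' → ShareVertex (gg k) (gg k') →
      (k = 0 ∧ k' = 1) ∨ (k = 1 ∧ k' = 0) := by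
    intro k k' hk hk' hkk ⟨x, hx1, hx2⟩
    obtain ⟨hlt, hjn⟩ := hbnd k hk
    obtain ⟨hlt', hjn'⟩ := hbnd k' hk'
    have hin : iidx k < n := lt_trans hlt hjn
    have hin' : iidx k' < n := lt_trans hlt' hjn'
    rw [hmemgg] at hx1 hx2
    have : iidx k = iidx k' ∨ iidx k = jidx k' ∨ jidx k = iidx k' ∨ jidx k = jidx k' := by
      rcases hx1 with h1 | h1 <;> rcases hx2 with h2 | h2
      · exact Or.inl (hinjι _ _ hin hin' (h1 ▸ h2 ▸ rfl : e.symm (ι (iidx k)) = e.symm (ι (iidx k'))))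
      · exact Or.inr (Or.inl (hinjι _ _ hin hjn' (h1 ▸ h2 ▸ rfl)))
      · exact Or.inr (Or.inr (Or.inl (hinjι _ _ hjn hin' (h1 ▸ h2 ▸ rfl))))
      · exact Or.inr (Or.inr (Or.inr (hinjι _ _ hjn hjn' (h1 ▸ h2 ▸ rfl))))
    rcases jidx_spec k with ⟨h0, hj⟩ | ⟨h1, hj⟩ <;>
      rcases jidx_spec k' with ⟨h0', hj'⟩ | ⟨h1', hj'⟩ <;>
      rw [hj, hj'] at this <;> unfold iidx at this <;> omega
  set M : Finset (Sym2 V) := (Finset.range K).image gg with hM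
  have hK2 : 2 ≤ K := by omega
  have hmemM : ∀ x, x ∈ M ↔ ∃ k, k < K ∧ gg k = x := by
    intro x
    simp only [hM, Finset.mem_image, Finset.mem_range]
  have hcardM : M.card = K := by
    rw [hM, Finset.card_image_of_injOn hinj, Finset.card_range]
  have hsub : ↑M ⊆ G.edgeSet := by
    intro x hx
    obtain ⟨k, hk, hkx⟩ := (hmemM x).1 hx
    rw [← hkx, hgg]
    exact G.mem_edgeSet.2 (hGadj k hk)
  have hg01 : ShareVertex (gg 0) (gg 1) := by
    refine ⟨e.symm (ι 1), ?_, ?_⟩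
    · rw [hmemgg]; right
      have : jidx 0 = 1 := rfl
      rw [this]
    · rw [hmemgg]; left
      have : iidx 1 = 1 := rfl
      rw [this]
  have hgne : gg 0 ≠ gg 1 := by
    intro hEq
    have h01 := hinj (by rw [Finset.coe_range]; exact Set.mem_Iio.2 (by omega))
      (by rw [Finset.coe_range]; exact Set.mem_Iio.2 (by omega)) hEq
    omega
  have hfilter : (M.offDiag.filter fun p => ShareVertex p.1 p.2) = {(gg 0, gg 1), (gg 1, gg 0)} := by
    ext ⟨p, q⟩
    simp only [Finset.mem_filter, Finset.mem_offDiag, Finset.mem_insert, Finset.mem_singleton,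
      Prod.mk.injEq]
    constructor
    · rintro ⟨⟨hp, hq, hpq⟩, hsh⟩
      obtain ⟨k, hk, hkp⟩ := (hmemM p).1 hp
      obtain ⟨k', hk', hkq⟩ := (hmemM q).1 hq
      have hkk : k ≠ k' := fun hEq => hpq (by rw [← hkp, ← hkq, hEq])
      rcases hshare k k' hk hk' hkk (by rw [hkp, hkq]; exact hsh) with ⟨h0, h1⟩ | ⟨h0, h1⟩
      · left; rw [← hkp, ← hkq, h0, h1]; exact ⟨rfl, rfl⟩
      · right; rw [← hkp, ← hkq, h0, h1]; exact ⟨rfl, rfl⟩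
    · have h0M : gg 0 ∈ M := (hmemM _).2 ⟨0, by omega, rfl⟩
      have h1M : gg 1 ∈ M := (hmemM _).2 ⟨1, by omega, rfl⟩
      rintro (⟨hp, hq⟩ | ⟨hp, hq⟩) <;> subst hp <;> subst hq
      · exact ⟨⟨h0M, h1M, hgne⟩, hg01⟩
      · refine ⟨⟨h1M, h0M, hgne.symm⟩, ?_⟩
        obtain ⟨x, hx1, hx2⟩ := hg01
        exact ⟨x, hx2, hx1⟩
  refine ⟨M, ⟨hsub, ?_⟩, hcardM⟩
  rw [hfilter]
  rw [Finset.card_insert_of_notMem (by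
    simp only [Finset.mem_singleton, Prod.mk.injEq, not_and]
    intro h; exact absurd h hgne), Finset.card_singleton]


lemma two_mul_card_le {V : Type*} [Fintype V] {G : SimpleGraph V} {M : Finset (Sym2 V)}
    (h : IsOneNearlyEdgeIndep G M) : 2 * M.card ≤ Fintype.card V + 1 := by
  obtain ⟨a, v, b, M', hav, hbv, hab, hMeq, hni1, hni2, hsub, hdisj, hpair⟩ := decomp h
  have hS := S_card a v b M' hav hbv hab hsub hdisj hpair
  have hle := Finset.card_le_univ (({a,v,b} : Finset V) ∪ M'.biUnion (fun g => {efst g, esnd g}))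
  have hM2 : M.card = M'.card + 2 := by
    rw [hMeq, Finset.card_insert_of_notMem hni1, Finset.card_insert_of_notMem hni2]
  omega

theorem edgeAlpha1_eq_max_iff_faithful {V : Type*} [Fintype V] (G : SimpleGraph V)
    {n : ℕ} (hn : 3 ≤ n) (hc : Fintype.card V = n) :
    edgeAlpha1 G = (n + 1) / 2 ↔
      ∃ e : V ≃ Fin n, ∀ a b : V,
        (faithfulForest n).Adj (e a) (e b) → G.Adj a b := by
  constructor
  · intro hα
    have hbdd : BddAbove {k | ∃ M : Finset (Sym2 V), IsOneNearlyEdgeIndep G M ∧ M.card = k} := by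
      refine ⟨(n+1)/2, ?_⟩
      rintro k ⟨M, hM, rfl⟩
      have := two_mul_card_le hM
      rw [hc] at this
      omega
    have hne : {k | ∃ M : Finset (Sym2 V), IsOneNearlyEdgeIndep G M ∧ M.card = k}.Nonempty := by
      by_contra hne
      rw [Set.not_nonempty_iff_eq_empty] at hne
      rw [edgeAlpha1, hne, csSup_empty] at hα
      have : (0:ℕ) = (n+1)/2 := hα
      omega
    have hmem := Nat.sSup_mem hne hbdd
    rw [show sSup {k | ∃ M : Finset (Sym2 V), IsOneNearlyEdgeIndep G M ∧ M.card = k} = edgeAlpha1 G from rfl, hα] at hmem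
    obtain ⟨M, hM, hMc⟩ := hmem
    exact forward hn hc hM hMc
  · rintro ⟨e, he⟩
    obtain ⟨M, hM, hMc⟩ := backward hn hc e he
    rw [edgeAlpha1]
    apply le_antisymm
    · refine csSup_le ⟨M.card, M, hM, rfl⟩ ?_
      rintro k ⟨M', hM', rfl⟩
      have := two_mul_card_le hM'
      rw [hc] at this
      omega
    · refine le_csSup ⟨(n+1)/2, ?_⟩ ⟨M, hM, hMc⟩
      rintro k ⟨M', hM', rfl⟩
      have := two_mul_card_le hM'
      rw [hc] at this
      omega
end

section
/- If G is a connected finite simple graph that contains a cycle and α'₁(G) = 2, then G has at most four vertices. -/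
open scoped Classical

section Helpers

variable {V : Type*} {G : SimpleGraph V}

/-- crossing lemma -/
lemma crossing {S : Set V} {a b : V} (w : G.Walk a b) (ha : a ∉ S) (hb : b ∈ S) :
    ∃ u s, u ∉ S ∧ s ∈ S ∧ G.Adj u s := by
  obtain ⟨d, _, hd1, hd2⟩ := w.exists_boundary_dart Sᶜ ha (by simpa using hb)
  exact ⟨d.fst, d.snd, hd1, by simpa using hd2, d.adj⟩

lemma exists_outside [Fintype V] (h5 : 5 ≤ Fintype.card V) (a b c d : V) :
    ∃ x, x ≠ a ∧ x ≠ b ∧ x ≠ c ∧ x ≠ d := by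
  by_contra h
  push_neg at h
  have hsub : (Finset.univ : Finset V) ⊆ {a, b, c, d} := by
    intro x _
    simp only [Finset.mem_insert, Finset.mem_singleton]
    by_cases h1 : x = a
    · tauto
    by_cases h2 : x = b
    · tauto
    by_cases h3 : x = c
    · tauto
    exact Or.inr (Or.inr (Or.inr (h x h1 h2 h3)))
  have h1 : Fintype.card V ≤ ({a, b, c, d} : Finset V).card := by
    rw [← Finset.card_univ]; exact Finset.card_le_card hsub
  have h2 : ({a, b, c, d} : Finset V).card ≤ 4 := by
    apply le_trans (Finset.card_insert_le _ _)
    apply Nat.succ_le_succ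
    apply le_trans (Finset.card_insert_le _ _)
    apply Nat.succ_le_succ
    apply le_trans (Finset.card_insert_le _ _)
    apply Nat.succ_le_succ
    simp
  omega

/-- the desired configuration gives a 1-nearly edge independent set of size 3 -/
lemma config_indep {u v w x y : V} (huv : G.Adj u v) (hvw : G.Adj v w) (hxy : G.Adj x y)
    (huw : u ≠ w) (hxu : x ≠ u) (hxv : x ≠ v) (hxw : x ≠ w)
    (hyu : y ≠ u) (hyv : y ≠ v) (hyw : y ≠ w) :
    IsOneNearlyEdgeIndep G {s(u, v), s(v, w), s(x, y)} ∧
      ({s(u, v), s(v, w), s(x, y)} : Finset (Sym2 V)).card = 3 := by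
  have huv' : u ≠ v := huv.ne
  have hvw' : v ≠ w := hvw.ne
  have hxy' : x ≠ y := hxy.ne
  have e12 : s(u, v) ≠ s(v, w) := by simp [Sym2.eq_iff]; tauto
  have e13 : s(u, v) ≠ s(x, y) := by simp [Sym2.eq_iff]; tauto
  have e23 : s(v, w) ≠ s(x, y) := by simp [Sym2.eq_iff]; tauto
  have hcard : ({s(u, v), s(v, w), s(x, y)} : Finset (Sym2 V)).card = 3 := by
    rw [Finset.card_insert_of_notMem (by simp [e12, e13]),
      Finset.card_insert_of_notMem (by simp [e23]), Finset.card_singleton]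
  refine ⟨⟨?_, ?_⟩, hcard⟩
  · intro e he
    simp only [Finset.coe_insert, Finset.coe_singleton, Set.mem_insert_iff,
      Set.mem_singleton_iff] at he
    rcases he with rfl | rfl | rfl <;> simpa using ‹_›
  · have : (({s(u, v), s(v, w), s(x, y)} : Finset (Sym2 V)).offDiag.filter
        fun p => ShareVertex p.1 p.2) = {(s(u, v), s(v, w)), (s(v, w), s(u, v))} := by
      ext ⟨e, f⟩
      rw [Finset.mem_filter]
      simp only [Finset.mem_filter, Finset.mem_offDiag, Finset.mem_insert,
        Finset.mem_singleton, Prod.mk.injEq, ShareVertex]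
      have nsh13 : ¬ (∃ z, z ∈ s(u, v) ∧ z ∈ s(x, y)) := by
        rintro ⟨z, hz1, hz2⟩
        simp only [Sym2.mem_iff] at hz1 hz2
        rcases hz1 with rfl | rfl <;> rcases hz2 with rfl | rfl <;> simp_all
      have nsh23 : ¬ (∃ z, z ∈ s(v, w) ∧ z ∈ s(x, y)) := by
        rintro ⟨z, hz1, hz2⟩
        simp only [Sym2.mem_iff] at hz1 hz2
        rcases hz1 with rfl | rfl <;> rcases hz2 with rfl | rfl <;> simp_all
      constructor
      · rintro ⟨⟨he, hf, hef⟩, hsh⟩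
        rcases he with rfl | rfl | rfl <;> rcases hf with rfl | rfl | rfl
        · exact absurd rfl hef
        · exact Or.inl ⟨rfl, rfl⟩
        · exact absurd hsh nsh13
        · exact Or.inr ⟨rfl, rfl⟩
        · exact absurd rfl hef
        · exact absurd hsh nsh23
        · exact absurd (hsh.imp fun z hz => ⟨hz.2, hz.1⟩) nsh13
        · exact absurd (hsh.imp fun z hz => ⟨hz.2, hz.1⟩) nsh23
        · exact absurd rfl hef
      · rintro (⟨rfl, rfl⟩ | ⟨rfl, rfl⟩)
        · exact ⟨⟨by simp, by simp, e12⟩, v, by simp, by simp⟩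
        · exact ⟨⟨by simp, by simp, e12.symm⟩, v, by simp, by simp⟩
    rw [this]
    rw [Finset.card_insert_of_notMem (by simp [e12]), Finset.card_singleton]

end Helpers

section Config

variable {V : Type*} {G : SimpleGraph V}

/-- The target configuration: a cherry `u-v-w` plus an edge `x-y` disjoint from it. -/
def Cfg (G : SimpleGraph V) : Prop :=
  ∃ u v w x y : V, G.Adj u v ∧ G.Adj v w ∧ G.Adj x y ∧ u ≠ w ∧
    x ≠ u ∧ x ≠ v ∧ x ≠ w ∧ y ≠ u ∧ y ≠ v ∧ y ≠ w

lemma quad (a b c d u : V) (hab : G.Adj a b) (hcd : G.Adj c d) (hda : G.Adj d a)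
    (hua : G.Adj u a)
    (hac : a ≠ c) (hbd : b ≠ d) (hbc : b ≠ c)
    (hub : u ≠ b) (huc : u ≠ c) (hud : u ≠ d) : Cfg G :=
  ⟨u, a, b, c, d, hua, hab, hcd, hub, huc.symm, hac.symm, hbc.symm,
    hud.symm, (hda.ne).symm.symm, hbd.symm⟩

lemma tri2 [Fintype V] (h5 : 5 ≤ Fintype.card V) (hconn : G.Preconnected)
    (a b c u : V) (hab : G.Adj a b) (hbc : G.Adj b c) (hca : G.Adj c a)
    (hua : G.Adj u a) (hub : u ≠ b) (huc : u ≠ c) : Cfg G := by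
  obtain ⟨x, hxu, hxa, hxb, hxc⟩ := exists_outside h5 u a b c
  have hx : x ∉ ({u, a, b, c} : Set V) := by simp [hxu, hxa, hxb, hxc]
  have ha : a ∈ ({u, a, b, c} : Set V) := by simp
  obtain ⟨w, z, hw, hz, hwz⟩ := crossing (hconn x a).some hx ha
  simp only [Set.mem_insert_iff, Set.mem_singleton_iff, not_or] at hw
  obtain ⟨hwu, hwa, hwb, hwc⟩ := hw
  have hba : b ≠ a := hab.ne'
  have hcb : c ≠ b := hbc.ne'
  have hac : a ≠ c := hca.ne'
  have hau : a ≠ u := hua.ne'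
  simp only [Set.mem_insert_iff, Set.mem_singleton_iff] at hz
  rcases hz with rfl | rfl | rfl | rfl
  · -- w ~ u : cherry w-u-a, edge b-c
    exact ⟨w, z, a, b, c, hwz, hua, hbc, hwa, (Ne.symm hwb), hub.symm, hba,
      (Ne.symm hwc), huc.symm, hac.symm⟩
  · -- w ~ a : cherry w-a-u, edge b-c
    exact ⟨w, z, u, b, c, hwz, hua.symm, hbc, hwu, (Ne.symm hwb), hba, hub.symm,
      (Ne.symm hwc), hac.symm, huc.symm⟩
  · -- w ~ b : cherry w-b-c, edge u-a
    exact ⟨w, z, c, u, a, hwz, hbc, hua, hwc, (Ne.symm hwu), hub, huc, (Ne.symm hwa),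
      hba.symm, hac⟩
  · -- w ~ c : cherry w-c-b, edge u-a
    exact ⟨w, z, b, u, a, hwz, hbc.symm, hua, hwb, (Ne.symm hwu), huc, hub,
      (Ne.symm hwa), hac, hba.symm⟩

end Config

section Cycle

variable {V : Type*} {G : SimpleGraph V}

lemma cfg_of_cycle [Fintype V] (h5 : 5 ≤ Fintype.card V) (hconn : G.Preconnected)
    {v : V} (c : G.Walk v v) (hc : c.IsCycle) : Cfg G := by
  have h3 := hc.three_le_length
  have hnd := hc.support_nodup
  by_cases hl5 : 5 ≤ c.length
  · -- long cycle : take 5 consecutive vertices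
    clear h3 hc
    cases c with
    | nil => simp at hl5
    | cons h1 p =>
      cases p with
      | nil => simp at hl5
      | cons h2 p =>
        cases p with
        | nil => simp at hl5
        | cons hh3 p =>
          cases p with
          | nil => simp [SimpleGraph.Walk.length_cons] at hl5
          | cons h4 p =>
            cases p with
            | nil => simp [SimpleGraph.Walk.length_cons] at hl5
            | cons h5' p =>
              rename_i p1 p2 p3 p4 p5
              simp only [SimpleGraph.Walk.support_cons, List.tail_cons,
                List.nodup_cons, List.mem_cons, not_or] at hnd
              obtain ⟨⟨h12, h13, h14, h1p⟩, ⟨h23, h24, h2p⟩, ⟨h34, h3p⟩, h4p, -⟩ := hnd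
              have hv : v ∈ p.support := p.end_mem_support
              refine ⟨v, p1, p2, p3, p4, h1, h2, h4, ?_, ?_, Ne.symm h13, Ne.symm h23,
                ?_, Ne.symm h14, Ne.symm h24⟩
              · exact fun h => h2p (by subst h; exact hv)
              · exact fun h => h3p (by subst h; exact hv)
              · exact fun h => h4p (by subst h; exact hv)
  by_cases hl4 : c.length = 4
  · -- 4-cycle
    clear h3 hl5 hc
    cases c with
    | nil => simp at hl4
    | cons h1 p =>
      cases p with
      | nil => simp at hl4
      | cons h2 p =>
        cases p with
        | nil => simp at hl4
        | cons hh3 p =>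
          cases p with
          | nil => simp at hl4
          | cons h4 p =>
            cases p with
            | cons h5' p => simp [SimpleGraph.Walk.length_cons] at hl4
            | nil =>
              rename_i b cc d
              simp only [SimpleGraph.Walk.support_cons, SimpleGraph.Walk.support_nil,
                List.tail_cons, List.nodup_cons, List.mem_cons, not_or,
                List.mem_singleton, List.not_mem_nil, or_false, and_true,
                List.nodup_nil, not_false_iff] at hnd
              obtain ⟨⟨hbc, hbd, hbv⟩, ⟨hcd, hcv⟩, hdv⟩ := hnd
              obtain ⟨x, hx1, hx2, hx3, hx4⟩ := exists_outside h5 v b cc d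
              have hxS : x ∉ {y | y ∈ (SimpleGraph.Walk.cons h1 (SimpleGraph.Walk.cons h2
                  (SimpleGraph.Walk.cons hh3 (SimpleGraph.Walk.cons h4
                  SimpleGraph.Walk.nil)))).support} := by
                simp [hx1, hx2, hx3, hx4]
              have hvS : v ∈ {y | y ∈ (SimpleGraph.Walk.cons h1 (SimpleGraph.Walk.cons h2
                  (SimpleGraph.Walk.cons hh3 (SimpleGraph.Walk.cons h4
                  SimpleGraph.Walk.nil)))).support} := by simp
              obtain ⟨u, s, hu, hs, hus⟩ := crossing (hconn x v).some hxS hvS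
              simp only [Set.mem_setOf_eq, SimpleGraph.Walk.support_cons,
                SimpleGraph.Walk.support_nil, List.mem_cons, List.mem_singleton,
                List.not_mem_nil, or_false, not_or] at hu hs
              obtain ⟨huv, hub, huc, hud, -⟩ := hu
              rcases hs with rfl | rfl | rfl | rfl | rfl
              · exact quad s b cc d u h1 hh3 h4 hus (Ne.symm hcv) hbd hbc hub huc hud
              · exact quad s cc d v u h2 h4 h1 hus hbd hcv hcd huc hud huv
              · exact quad s d v b u hh3 h1 h2 hus hcv (Ne.symm hbd) hdv hud huv hub
              · exact quad s v b cc u h4 h2 hh3 hus (Ne.symm hbd) (Ne.symm hcv)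
                  (Ne.symm hbv) huv hub huc
              · exact quad s b cc d u h1 hh3 h4 hus (Ne.symm hcv) hbd hbc hub huc hud
  · -- triangle
    have hl3 : c.length = 3 := by omega
    clear h3 hl5 hl4 hc
    cases c with
    | nil => simp at hl3
    | cons h1 p =>
      cases p with
      | nil => simp at hl3
      | cons h2 p =>
        cases p with
        | nil => simp at hl3
        | cons hh3 p =>
          cases p with
          | cons h4 p => simp [SimpleGraph.Walk.length_cons] at hl3
          | nil =>
            rename_i b cc
            simp only [SimpleGraph.Walk.support_cons, SimpleGraph.Walk.support_nil,
              List.tail_cons, List.nodup_cons, List.mem_cons, not_or,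
              List.mem_singleton, List.not_mem_nil, or_false, and_true,
              List.nodup_nil, not_false_iff] at hnd
            obtain ⟨⟨hbc, hbv⟩, hcv⟩ := hnd
            obtain ⟨x, hx1, hx2, hx3, -⟩ := exists_outside h5 v b cc cc
            have hxS : x ∉ {y | y ∈ (SimpleGraph.Walk.cons h1 (SimpleGraph.Walk.cons h2
                (SimpleGraph.Walk.cons hh3 SimpleGraph.Walk.nil))).support} := by
              simp [hx1, hx2, hx3]
            have hvS : v ∈ {y | y ∈ (SimpleGraph.Walk.cons h1 (SimpleGraph.Walk.cons h2
                (SimpleGraph.Walk.cons hh3 SimpleGraph.Walk.nil))).support} := by simp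
            obtain ⟨u, s, hu, hs, hus⟩ := crossing (hconn x v).some hxS hvS
            simp only [Set.mem_setOf_eq, SimpleGraph.Walk.support_cons,
              SimpleGraph.Walk.support_nil, List.mem_cons, List.mem_singleton,
              List.not_mem_nil, or_false, not_or] at hu hs
            obtain ⟨huv, hub, huc, -⟩ := hu
            rcases hs with rfl | rfl | rfl | rfl
            · exact tri2 h5 hconn s b cc u h1 h2 hh3 hus hub huc
            · exact tri2 h5 hconn s cc v u h2 hh3 h1 hus huc huv
            · exact tri2 h5 hconn s v b u hh3 h1 h2 hus huv hub
            · exact tri2 h5 hconn s b cc u h1 h2 hh3 hus hub huc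

end Cycle

theorem card_le_four_of_connected_cyclic {V : Type*} [Fintype V]
    (G : SimpleGraph V) (hconn : G.Connected) (hcyc : ¬ G.IsAcyclic)
    (h2 : edgeAlpha1 G = 2) : Fintype.card V ≤ 4 := by
  by_contra hcard
  push_neg at hcard
  have h5 : 5 ≤ Fintype.card V := hcard
  unfold SimpleGraph.IsAcyclic at hcyc
  push_neg at hcyc
  obtain ⟨v, c, hc⟩ := hcyc
  obtain ⟨u, vv, w, x, y, huv, hvw, hxy, huw, hxu, hxv, hxw, hyu, hyv, hyw⟩ :=
    cfg_of_cycle h5 hconn.preconnected c hc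
  obtain ⟨hM, hMcard⟩ := config_indep huv hvw hxy huw hxu hxv hxw hyu hyv hyw
  have h3mem : 3 ∈ {k | ∃ M : Finset (Sym2 V), IsOneNearlyEdgeIndep G M ∧ M.card = k} :=
    ⟨_, hM, hMcard⟩
  have hbdd : BddAbove {k | ∃ M : Finset (Sym2 V), IsOneNearlyEdgeIndep G M ∧ M.card = k} := by
    refine ⟨Fintype.card (Sym2 V), ?_⟩
    rintro k ⟨M, -, rfl⟩
    exact Finset.card_le_univ M
  have h3le : 3 ≤ edgeAlpha1 G := le_csSup hbdd h3mem
  omega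
end

section
/- If T is a tree on n ≥ 3 vertices with α'₁(T) = 2, then T is isomorphic to the star K_{1,n-1} or to the path P₄. -/
open scoped Classical

/-- The star `K_{1,n-1}` on `Fin n` with center `0`. -/
def starGraph (n : ℕ) : SimpleGraph (Fin n) where
  Adj a b := a ≠ b ∧ (a.val = 0 ∨ b.val = 0)
  symm := ⟨fun a b ⟨h1, h2⟩ => ⟨h1.symm, h2.symm⟩⟩
  loopless := ⟨fun a h => h.1 rfl⟩

lemma shareVertex_symm {V : Type*} {e f : Sym2 V} (h : ShareVertex e f) : ShareVertex f e := by
  obtain ⟨v, h1, h2⟩ := h; exact ⟨v, h2, h1⟩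

lemma shareVertex_self {V : Type*} (e : Sym2 V) : ShareVertex e e :=
  ⟨e.out.1, by simp [Sym2.out_fst_mem], by simp [Sym2.out_fst_mem]⟩

lemma share_sym2_iff {V : Type*} {a b x y : V} :
    ShareVertex (Sym2.mk a b) (Sym2.mk x y) ↔ a = x ∨ a = y ∨ b = x ∨ b = y := by
  simp [ShareVertex, Sym2.mem_iff]; tauto

lemma triple_indep {V : Type*} (G : SimpleGraph V) {e f g : Sym2 V}
    (he : e ∈ G.edgeSet) (hf : f ∈ G.edgeSet) (hg : g ∈ G.edgeSet)
    (hef : e ≠ f) (hs : ShareVertex e f)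
    (h1 : ¬ ShareVertex e g) (h2 : ¬ ShareVertex f g) :
    IsOneNearlyEdgeIndep G ({e, f, g} : Finset (Sym2 V)) ∧
      ({e, f, g} : Finset (Sym2 V)).card = 3 := by
  have hge : g ≠ e := fun h => h1 (h ▸ shareVertex_self e)
  have hgf : g ≠ f := fun h => h2 (h ▸ shareVertex_self f)
  constructor
  · constructor
    · intro x hx
      simp only [Finset.coe_insert, Set.mem_insert_iff, Finset.coe_singleton,
        Set.mem_singleton_iff] at hx
      rcases hx with rfl | rfl | rfl <;> assumption
    · have : (({e, f, g} : Finset (Sym2 V)).offDiag.filter fun p => ShareVertex p.1 p.2)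
          = {(e, f), (f, e)} := by
        ext ⟨p, q⟩
        simp only [Finset.mem_filter, Finset.mem_offDiag, Finset.mem_insert,
          Finset.mem_singleton, Prod.mk.injEq]
        constructor
        · rintro ⟨⟨hp, hq, hpq⟩, hsh⟩
          rcases hp with rfl | rfl | rfl <;> rcases hq with rfl | rfl | rfl <;>
            first
            | exact absurd rfl hpq
            | exact absurd hsh h1
            | exact absurd hsh h2
            | exact absurd (shareVertex_symm hsh) h1
            | exact absurd (shareVertex_symm hsh) h2
            | tauto
        · rintro (⟨rfl, rfl⟩ | ⟨rfl, rfl⟩)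
          · exact ⟨⟨by simp, by simp, hef⟩, hs⟩
          · exact ⟨⟨by simp, by simp, hef.symm⟩, shareVertex_symm hs⟩
      rw [this]
      rw [Finset.card_insert_of_notMem (by simp [Prod.ext_iff]; tauto), Finset.card_singleton]
  · rw [Finset.card_insert_of_notMem (by simp [hef, hge.symm]),
      Finset.card_insert_of_notMem (by simp [hgf.symm]), Finset.card_singleton]

lemma alpha_facts {V : Type*} [Fintype V] (G : SimpleGraph V) (h2 : edgeAlpha1 G = 2) :
    (∃ M : Finset (Sym2 V), IsOneNearlyEdgeIndep G M ∧ M.card = 2) ∧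
      ¬ (∃ M : Finset (Sym2 V), IsOneNearlyEdgeIndep G M ∧ M.card = 3) := by
  set S : Set ℕ := {k | ∃ M : Finset (Sym2 V), IsOneNearlyEdgeIndep G M ∧ M.card = k} with hS
  have hbdd : BddAbove S := by
    refine ⟨Fintype.card (Sym2 V), ?_⟩
    rintro k ⟨M, _, rfl⟩
    exact Finset.card_le_univ M
  have hne : S.Nonempty := by
    by_contra h
    rw [Set.not_nonempty_iff_eq_empty] at h
    rw [edgeAlpha1, ← hS, h, csSup_empty] at h2
    simp at h2
  constructor
  · have := Nat.sSup_mem hne hbdd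
    rw [show sSup S = 2 from h2] at this
    exact this
  · rintro h3
    have : (3 : ℕ) ∈ S := h3
    have := le_csSup hbdd this
    rw [show sSup S = 2 from h2] at this
    omega

lemma pair_extract {V : Type*} (G : SimpleGraph V)
    (h : ∃ M : Finset (Sym2 V), IsOneNearlyEdgeIndep G M ∧ M.card = 2) :
    ∃ b a c : V, a ≠ c ∧ G.Adj b a ∧ G.Adj b c := by
  obtain ⟨M, ⟨hsub, hcard⟩, hM2⟩ := h
  obtain ⟨e, f, hef, rfl⟩ := Finset.card_eq_two.mp hM2
  have hshare : ShareVertex e f := by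
    have hod : ({e, f} : Finset (Sym2 V)).offDiag = {(e, f), (f, e)} := by
      ext ⟨p, q⟩
      simp only [Finset.mem_offDiag, Finset.mem_insert, Finset.mem_singleton, Prod.mk.injEq]
      constructor
      · rintro ⟨hp, hq, hpq⟩
        rcases hp with rfl | rfl <;> rcases hq with rfl | rfl <;> tauto
      · rintro (⟨rfl, rfl⟩ | ⟨rfl, rfl⟩) <;> simp [hef, hef.symm]
    have hcard2 : ({e, f} : Finset (Sym2 V)).offDiag.card = 2 := by
      rw [hod, Finset.card_insert_of_notMem (by simp [Prod.ext_iff]; tauto),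
        Finset.card_singleton]
    have hle : ({e, f} : Finset (Sym2 V)).offDiag.card ≤
        (({e, f} : Finset (Sym2 V)).offDiag.filter fun p => ShareVertex p.1 p.2).card := by
      rw [hcard, hcard2]
    have heq := Finset.eq_of_subset_of_card_le (Finset.filter_subset _ _) hle
    have : (e, f) ∈ ({e, f} : Finset (Sym2 V)).offDiag.filter fun p => ShareVertex p.1 p.2 := by
      rw [heq, hod]; simp
    exact (Finset.mem_filter.mp this).2
  obtain ⟨v, hve, hvf⟩ := hshare
  obtain ⟨a, rfl⟩ := Sym2.mem_iff_exists.mp hve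
  obtain ⟨c, rfl⟩ := Sym2.mem_iff_exists.mp hvf
  refine ⟨v, a, c, ?_, ?_, ?_⟩
  · rintro rfl; exact hef rfl
  · exact G.mem_edgeSet.mp (hsub (by simp))
  · exact G.mem_edgeSet.mp (hsub (by simp))

lemma exists_two_away {V : Type*} (G : SimpleGraph V) {b x : V} (p : G.Walk x b)
    (hx : x ≠ b) (hnadj : ¬ G.Adj b x) :
    ∃ z w, G.Adj b z ∧ G.Adj z w ∧ w ≠ b ∧ ¬ G.Adj b w := by
  revert hx hnadj
  induction p with
  | nil => intro hx _; exact absurd rfl hx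
  | @cons u y b' h q ih =>
    intro hx hnadj
    by_cases hyb : y = b'
    · subst hyb; exact absurd h.symm hnadj
    · by_cases hby : G.Adj b' y
      · exact ⟨y, u, hby, h.symm, hx, hnadj⟩
      · exact ih hyb hby

lemma exists_neighbor {V : Type*} {G : SimpleGraph V} {x b : V} (p : G.Walk x b)
    (hx : x ≠ b) : ∃ y, G.Adj x y := by
  cases p with
  | nil => exact absurd rfl hx
  | cons h _ => exact ⟨_, h⟩

lemma star_case {V : Type*} [Fintype V] (G : SimpleGraph V) (htree : G.IsTree) {n : ℕ}
    (hc : Fintype.card V = n) (hn : 3 ≤ n) (c : V) (huniv : ∀ v, v ≠ c → G.Adj c v) :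
    Nonempty (G ≃g starGraph n) := by
  classical
  have hedges : G.edgeFinset.card = n - 1 := by
    have := htree.card_edgeFinset
    omega
  set Ec : Finset (Sym2 V) := (Finset.univ.erase c).image (fun v => Sym2.mk c v) with hEc
  have hsub : Ec ⊆ G.edgeFinset := by
    intro e he
    simp only [hEc, Finset.mem_image, Finset.mem_erase] at he
    obtain ⟨v, ⟨hv, -⟩, rfl⟩ := he
    rw [SimpleGraph.mem_edgeFinset]
    exact G.mem_edgeSet.mpr (huniv v hv)
  have hcardEc : Ec.card = n - 1 := by
    rw [hEc, Finset.card_image_of_injOn, Finset.card_erase_of_mem (Finset.mem_univ c),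
      Finset.card_univ, hc]
    intro u _ v _ h
    exact (Sym2.congr_right).mp h
  have hEq : Ec = G.edgeFinset :=
    Finset.eq_of_subset_of_card_le hsub (by rw [hedges, hcardEc])
  have hadj : ∀ u v, G.Adj u v ↔ u ≠ v ∧ (u = c ∨ v = c) := by
    intro u v
    constructor
    · intro h
      refine ⟨h.ne, ?_⟩
      have : Sym2.mk u v ∈ Ec := by
        rw [hEq, SimpleGraph.mem_edgeFinset]; exact G.mem_edgeSet.mpr h
      simp only [hEc, Finset.mem_image, Finset.mem_erase] at this
      obtain ⟨w, -, hw⟩ := this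
      have : c ∈ Sym2.mk u v := hw ▸ (by simp)
      rcases Sym2.mem_iff.mp this with h' | h'
      · left; exact h'.symm
      · right; exact h'.symm
    · rintro ⟨hne, rfl | rfl⟩
      · exact (huniv _ (Ne.symm hne)).symm.symm
      · exact (huniv _ hne).symm
  haveI : NeZero n := ⟨by omega⟩
  let e0 : V ≃ Fin n := Fintype.equivFinOfCardEq hc
  let φ : V ≃ Fin n := e0.trans (Equiv.swap (e0 c) 0)
  have hφc : φ c = 0 := by simp [φ, Equiv.swap_apply_left]
  have hzero : ∀ u : V, φ u = 0 ↔ u = c := by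
    intro u
    rw [← hφc]
    exact ⟨fun h => φ.injective h, fun h => h ▸ rfl⟩
  refine ⟨⟨φ, ?_⟩⟩
  intro u v
  show (φ u ≠ φ v ∧ ((φ u).val = 0 ∨ (φ v).val = 0)) ↔ G.Adj u v
  have hval : ∀ w : Fin n, w.val = 0 ↔ w = 0 := fun w => by
    rw [Fin.ext_iff, Fin.val_zero]
  rw [hadj u v, hval, hval, hzero, hzero]
  exact and_congr_left fun _ => not_congr (EmbeddingLike.apply_eq_iff_eq φ)

lemma path_case {V : Type*} [Fintype V] (G : SimpleGraph V) (htree : G.IsTree)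
    {A B C D : V} (hAB : G.Adj A B) (hBC : G.Adj B C) (hCD : G.Adj C D)
    (hAC : A ≠ C) (hAD : A ≠ D) (hBD : B ≠ D)
    (huniv : ∀ x : V, x = A ∨ x = B ∨ x = C ∨ x = D) :
    Nonempty (G ≃g SimpleGraph.pathGraph 4) := by
  classical
  have hab : A ≠ B := hAB.ne
  have hbc : B ≠ C := hBC.ne
  have hcd : C ≠ D := hCD.ne
  have hcard : Fintype.card V = 4 := by
    have huniveq : (Finset.univ : Finset V) = {A, B, C, D} := by
      apply Finset.eq_of_subset_of_card_le
      · intro x _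
        simp only [Finset.mem_insert, Finset.mem_singleton]
        exact huniv x
      · exact Finset.card_le_univ _
    rw [Fintype.card, huniveq]
    rw [Finset.card_insert_of_notMem (by simp [hab, hAC, hAD]),
      Finset.card_insert_of_notMem (by simp [hbc, hBD]),
      Finset.card_insert_of_notMem (by simp [hcd]), Finset.card_singleton]
  set EF : Finset (Sym2 V) := {Sym2.mk A B, Sym2.mk B C, Sym2.mk C D} with hEF
  have hsub : EF ⊆ G.edgeFinset := by
    intro e he
    simp only [hEF, Finset.mem_insert, Finset.mem_singleton] at he
    rcases he with rfl | rfl | rfl <;> rw [SimpleGraph.mem_edgeFinset] <;>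
      exact G.mem_edgeSet.mpr (by assumption)
  have hcardEF : EF.card = 3 := by
    rw [hEF, Finset.card_insert_of_notMem (by simp [Sym2.eq_iff]; tauto),
      Finset.card_insert_of_notMem (by simp [Sym2.eq_iff]; tauto), Finset.card_singleton]
  have hedges : G.edgeFinset.card = 3 := by
    have := htree.card_edgeFinset
    omega
  have hEq : EF = G.edgeFinset :=
    Finset.eq_of_subset_of_card_le hsub (by rw [hedges, hcardEF])
  have hadj : ∀ u v : V, G.Adj u v ↔
      (Sym2.mk u v = Sym2.mk A B ∨ Sym2.mk u v = Sym2.mk B C ∨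
        Sym2.mk u v = Sym2.mk C D) := by
    intro u v
    rw [← G.mem_edgeSet, ← SimpleGraph.mem_edgeFinset, ← hEq, hEF]
    simp
  let f : Fin 4 → V := ![A, B, C, D]
  have hinj : Function.Injective f := by
    intro i j hij
    fin_cases i <;> fin_cases j <;> simp_all [f] <;>
      first
      | rfl
      | exact absurd hij (by assumption)
      | exact absurd hij.symm (by assumption)
  have hbij : Function.Bijective f :=
    (Fintype.bijective_iff_injective_and_card f).mpr ⟨hinj, by rw [hcard]; rfl⟩
  let φ : Fin 4 ≃ V := Equiv.ofBijective f hbij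
  refine ⟨((⟨φ, ?_⟩ : SimpleGraph.pathGraph 4 ≃g G)).symm⟩
  intro i j
  show G.Adj (f i) (f j) ↔ (SimpleGraph.pathGraph 4).Adj i j
  rw [hadj]
  fin_cases i <;> fin_cases j <;>
    simp [f, SimpleGraph.pathGraph_adj, Sym2.eq_iff, hab, hbc, hcd, hAC, hAD, hBD,
      hab.symm, hbc.symm, hcd.symm, hAC.symm, hAD.symm, hBD.symm] <;> decide

set_option maxHeartbeats 1600000 in
theorem tree_with_edgeAlpha1_two {V : Type*} [Fintype V] (G : SimpleGraph V)
    (htree : G.IsTree) {n : ℕ} (hc : Fintype.card V = n) (hn : 3 ≤ n)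
    (h2 : edgeAlpha1 G = 2) :
    Nonempty (G ≃g starGraph n) ∨ Nonempty (G ≃g SimpleGraph.pathGraph 4) := by
  classical
  obtain ⟨hex2, hno3⟩ := alpha_facts G h2
  by_cases hstar : ∃ c : V, ∀ v, v ≠ c → G.Adj c v
  · obtain ⟨c, hcu⟩ := hstar
    exact Or.inl (star_case G htree hc hn c hcu)
  · right
    push_neg at hstar
    obtain ⟨b, a, c, hac, hba, hbc⟩ := pair_extract G hex2
    obtain ⟨x0, hx0b, hnadj0⟩ := hstar b
    obtain ⟨p0⟩ := htree.isConnected.preconnected x0 b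
    obtain ⟨z, w, hbz, hzw, hwb, hnbw⟩ := exists_two_away G p0 hx0b hnadj0
    -- choose a neighbor of b different from z
    have hA : ∃ a', G.Adj b a' ∧ a' ≠ z := by
      by_cases haz : a = z
      · exact ⟨c, hbc, fun h => hac (by rw [haz, h])⟩
      · exact ⟨a, hba, haz⟩
    obtain ⟨A, hbA, hAz⟩ := hA
    -- the path A - b - z - w
    have hAB : G.Adj A b := hbA.symm
    have hBC : G.Adj b z := hbz
    have hCD : G.Adj z w := hzw
    have hab' : A ≠ b := hAB.ne
    have hbc' : b ≠ z := hBC.ne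
    have hcd' : z ≠ w := hCD.ne
    have hAC : A ≠ z := hAz
    have hBD : b ≠ w := Ne.symm hwb
    have hAD : A ≠ w := by
      rintro rfl
      exact hnbw hbA
    have key : ∀ e f g : Sym2 V, e ∈ G.edgeSet → f ∈ G.edgeSet → g ∈ G.edgeSet →
        e ≠ f → ShareVertex e f → ¬ ShareVertex e g → ¬ ShareVertex f g → False := by
      intro e f g he hf hg hef hs h1' h2'
      obtain ⟨hi, hcard3⟩ := triple_indep G he hf hg hef hs h1' h2'
      exact hno3 ⟨_, hi, hcard3⟩
    have huniv : ∀ x : V, x = A ∨ x = b ∨ x = z ∨ x = w := by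
      intro x
      by_contra hx
      push_neg at hx
      obtain ⟨hxA, hxB, hxC, hxD⟩ := hx
      obtain ⟨q⟩ := htree.isConnected.preconnected x b
      obtain ⟨y, hxy⟩ := exists_neighbor q hxB
      have heAB : Sym2.mk A b ∈ G.edgeSet := G.mem_edgeSet.mpr hAB
      have heBC : Sym2.mk b z ∈ G.edgeSet := G.mem_edgeSet.mpr hBC
      have heCD : Sym2.mk z w ∈ G.edgeSet := G.mem_edgeSet.mpr hCD
      have hexy : Sym2.mk x y ∈ G.edgeSet := G.mem_edgeSet.mpr hxy
      have hABBC : Sym2.mk A b ≠ Sym2.mk b z := by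
        intro h
        rcases Sym2.eq_iff.mp h with ⟨h1, -⟩ | ⟨h1, -⟩
        exacts [hab' h1, hAC h1]
      have hBCCD : Sym2.mk b z ≠ Sym2.mk z w := by
        intro h
        rcases Sym2.eq_iff.mp h with ⟨h1, -⟩ | ⟨h1, -⟩
        exacts [hbc' h1, hBD h1]
      have hsABBC : ShareVertex (Sym2.mk A b) (Sym2.mk b z) :=
        share_sym2_iff.mpr (Or.inr (Or.inr (Or.inl rfl)))
      have hsBCCD : ShareVertex (Sym2.mk b z) (Sym2.mk z w) :=
        share_sym2_iff.mpr (Or.inr (Or.inr (Or.inl rfl)))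
      have h1 : ShareVertex (Sym2.mk A b) (Sym2.mk x y) ∨
          ShareVertex (Sym2.mk b z) (Sym2.mk x y) := by
        by_contra hcon
        push_neg at hcon
        exact key _ _ _ heAB heBC hexy hABBC hsABBC hcon.1 hcon.2
      have h2' : ShareVertex (Sym2.mk b z) (Sym2.mk x y) ∨
          ShareVertex (Sym2.mk z w) (Sym2.mk x y) := by
        by_contra hcon
        push_neg at hcon
        exact key _ _ _ heBC heCD hexy hBCCD hsBCCD hcon.1 hcon.2
      rw [share_sym2_iff, share_sym2_iff] at h1
      rw [share_sym2_iff, share_sym2_iff] at h2'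
      have hy1 : y = A ∨ y = b ∨ y = z := by
        rcases h1 with (h | h | h | h) | (h | h | h | h)
        exacts [absurd h.symm hxA, Or.inl h.symm, absurd h.symm hxB,
          Or.inr (Or.inl h.symm), absurd h.symm hxB, Or.inr (Or.inl h.symm),
          absurd h.symm hxC, Or.inr (Or.inr h.symm)]
      have hy2 : y = b ∨ y = z ∨ y = w := by
        rcases h2' with (h | h | h | h) | (h | h | h | h)
        exacts [absurd h.symm hxB, Or.inl h.symm, absurd h.symm hxC,
          Or.inr (Or.inl h.symm), absurd h.symm hxC, Or.inr (Or.inl h.symm),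
          absurd h.symm hxD, Or.inr (Or.inr h.symm)]
      have hy : y = b ∨ y = z := by
        rcases hy1 with rfl | rfl | rfl
        · rcases hy2 with h | h | h
          exacts [absurd h hab', absurd h hAC, absurd h hAD]
        · exact Or.inl rfl
        · exact Or.inr rfl
      rcases hy with hyb | hyz
      · -- y = b : edges xB, AB share b; CD disjoint
        rw [hyb] at hxy
        refine key (Sym2.mk x b) (Sym2.mk A b) (Sym2.mk z w)
          (G.mem_edgeSet.mpr hxy) heAB heCD ?_ ?_ ?_ ?_
        · intro h
          rcases Sym2.eq_iff.mp h with ⟨h1, -⟩ | ⟨h1, -⟩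
          exacts [hxA h1, hxB h1]
        · exact share_sym2_iff.mpr (Or.inr (Or.inr (Or.inr rfl)))
        · rw [share_sym2_iff]
          push_neg
          exact ⟨hxC, hxD, hbc', hBD⟩
        · rw [share_sym2_iff]
          push_neg
          exact ⟨hAC, hAD, hbc', hBD⟩
      · -- y = z : edges xC, CD share z; AB disjoint
        rw [hyz] at hxy
        refine key (Sym2.mk x z) (Sym2.mk z w) (Sym2.mk A b)
          (G.mem_edgeSet.mpr hxy) heCD heAB ?_ ?_ ?_ ?_
        · intro h
          rcases Sym2.eq_iff.mp h with ⟨h1, -⟩ | ⟨h1, -⟩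
          exacts [hxC h1, hxD h1]
        · exact share_sym2_iff.mpr (Or.inr (Or.inr (Or.inl rfl)))
        · rw [share_sym2_iff]
          push_neg
          exact ⟨hxA, hxB, Ne.symm hAC, fun h => hbc' h.symm⟩
        · rw [share_sym2_iff]
          push_neg
          exact ⟨Ne.symm hAC, fun h => hbc' h.symm, Ne.symm hAD, fun h => hBD h.symm⟩
    exact path_case G htree hAB hBC hCD hAC hAD hBD huniv
end

section
/- If T is a tree on n ≥ 5 vertices whose maximum degree Δ satisfies 3 ≤ Δ ≤ n − 2, then α'₁(T) ≥ 3. -/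
open scoped Classical

lemma key_s17 {V : Type*} [Fintype V] (G : SimpleGraph V) (e f g : Sym2 V)
    (hef : e ≠ f) (heg : e ≠ g) (hfg : f ≠ g)
    (he : e ∈ G.edgeSet) (hf : f ∈ G.edgeSet) (hg : g ∈ G.edgeSet)
    (s1 : ShareVertex e f) (s2 : ¬ ShareVertex e g) (s3 : ¬ ShareVertex f g) :
    3 ≤ edgeAlpha1 G := by
  classical
  have hfilter : ((({e, f, g} : Finset (Sym2 V)).offDiag).filter fun p => ShareVertex p.1 p.2)
      = {(e, f), (f, e)} := by
    ext p
    simp only [Finset.mem_filter, Finset.mem_offDiag, Finset.mem_insert, Finset.mem_singleton,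
      Prod.ext_iff]
    constructor
    · rintro ⟨⟨h1, h2, h3⟩, h4⟩
      rcases h1 with rfl | rfl | rfl <;> rcases h2 with h2 | h2 | h2 <;>
        first
          | (exfalso; exact h3 h2.symm)
          | (exfalso; subst h2; exact h3 rfl)
          | (exfalso; subst h2; exact s2 h4)
          | (exfalso; subst h2; exact s3 h4)
          | (exfalso; subst h2; exact s2 (shareVertex_symm h4))
          | (exfalso; subst h2; exact s3 (shareVertex_symm h4))
          | tauto
    · rintro (⟨h1, h2⟩ | ⟨h1, h2⟩) <;> subst h1 <;> subst h2
      · exact ⟨⟨Or.inl rfl, Or.inr (Or.inl rfl), hef⟩, s1⟩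
      · exact ⟨⟨Or.inr (Or.inl rfl), Or.inl rfl, Ne.symm hef⟩, shareVertex_symm s1⟩
  have hM : IsOneNearlyEdgeIndep G {e, f, g} := by
    refine ⟨?_, ?_⟩
    · intro x hx
      simp only [Finset.coe_insert, Set.mem_insert_iff, Finset.coe_singleton,
        Set.mem_singleton_iff] at hx
      rcases hx with rfl | rfl | rfl <;> assumption
    · rw [hfilter]
      rw [Finset.card_insert_of_notMem (by simp [Prod.ext_iff]; intro h; exact absurd h hef),
        Finset.card_singleton]
  have hcard : ({e, f, g} : Finset (Sym2 V)).card = 3 := by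
    rw [Finset.card_insert_of_notMem (by simp [hef, heg]),
      Finset.card_insert_of_notMem (by simp [hfg]), Finset.card_singleton]
  have hbdd : BddAbove {k | ∃ M : Finset (Sym2 V), IsOneNearlyEdgeIndep G M ∧ M.card = k} := by
    refine ⟨Fintype.card (Sym2 V), ?_⟩
    rintro k ⟨M, _, rfl⟩
    exact M.card_le_univ
  exact le_csSup hbdd ⟨{e, f, g}, hM, hcard⟩

theorem edgeAlpha1_ge_three_of_tree_middle_maxDegree {V : Type*} [Fintype V]
    (G : SimpleGraph V) (htree : G.IsTree) {n : ℕ} (hc : Fintype.card V = n)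
    (hn : 5 ≤ n) (hΔlow : ∃ v : V, 3 ≤ G.degree v)
    (hΔhigh : ∀ v : V, G.degree v ≤ n - 2) :
    3 ≤ edgeAlpha1 G := by
  classical
  obtain ⟨v, hv⟩ := hΔlow
  have hdeg : G.degree v ≤ n - 2 := hΔhigh v
  obtain ⟨w, hw⟩ : ∃ w, w ∉ insert v (G.neighborFinset v) := by
    by_contra h
    push_neg at h
    have hsub : (Finset.univ : Finset V) ⊆ insert v (G.neighborFinset v) := fun x _ => h x
    have h1 := Finset.card_le_card hsub
    have h2 : (insert v (G.neighborFinset v)).card ≤ G.degree v + 1 := by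
      simpa [SimpleGraph.card_neighborFinset_eq_degree] using
        Finset.card_insert_le v (G.neighborFinset v)
    rw [Finset.card_univ, hc] at h1
    omega
  simp only [Finset.mem_insert, SimpleGraph.mem_neighborFinset, not_or] at hw
  obtain ⟨hwv, hwadj⟩ := hw
  -- w has a neighbor
  obtain ⟨p⟩ := htree.isConnected.preconnected w v
  obtain ⟨x, hwx⟩ : ∃ x, G.Adj w x := by
    cases p with
    | nil => exact absurd rfl hwv
    | cons h q => exact ⟨_, h⟩
  have hxv : x ≠ v := by
    rintro rfl
    exact hwadj hwx.symm
  -- pick two neighbors of v avoiding x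
  have hcard2 : 1 < ((G.neighborFinset v).erase x).card := by
    have := Finset.pred_card_le_card_erase (s := G.neighborFinset v) (a := x)
    rw [SimpleGraph.card_neighborFinset_eq_degree] at this
    omega
  obtain ⟨a, ha, b, hb, hab⟩ := Finset.one_lt_card.mp hcard2
  have hax : a ≠ x := Finset.ne_of_mem_erase ha
  have hbx : b ≠ x := Finset.ne_of_mem_erase hb
  have hva : G.Adj v a := by
    have := Finset.mem_of_mem_erase ha
    rwa [SimpleGraph.mem_neighborFinset] at this
  have hvb : G.Adj v b := by
    have := Finset.mem_of_mem_erase hb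
    rwa [SimpleGraph.mem_neighborFinset] at this
  have haw : a ≠ w := by rintro rfl; exact hwadj hva
  have hbw : b ≠ w := by rintro rfl; exact hwadj hvb
  have hvw : v ≠ w := Ne.symm hwv
  have hvx : v ≠ x := Ne.symm hxv
  have hvane : v ≠ a := hva.ne
  have hvbne : v ≠ b := hvb.ne
  have hwxne : w ≠ x := hwx.ne
  refine key_s17 G s(v, a) s(v, b) s(w, x) ?_ ?_ ?_ ?_ ?_ ?_ ?_ ?_ ?_
  · intro h; rw [Sym2.eq_iff] at h
    rcases h with ⟨-, h2⟩ | ⟨h1, -⟩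
    · exact hab h2
    · exact hvbne h1
  · intro h; rw [Sym2.eq_iff] at h
    rcases h with ⟨h1, -⟩ | ⟨h1, -⟩
    · exact hvw h1
    · exact hvx h1
  · intro h; rw [Sym2.eq_iff] at h
    rcases h with ⟨h1, -⟩ | ⟨h1, -⟩
    · exact hvw h1
    · exact hvx h1
  · exact hva
  · exact hvb
  · exact hwx
  · exact ⟨v, by simp, by simp⟩
  · rintro ⟨t, ht1, ht2⟩
    rw [Sym2.mem_iff] at ht1 ht2
    rcases ht1 with rfl | rfl <;> rcases ht2 with rfl | rfl
    · exact hvw rfl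
    · exact hvx rfl
    · exact haw rfl
    · exact hax rfl
  · rintro ⟨t, ht1, ht2⟩
    rw [Sym2.mem_iff] at ht1 ht2
    rcases ht1 with rfl | rfl <;> rcases ht2 with rfl | rfl
    · exact hvw rfl
    · exact hvx rfl
    · exact hbw rfl
    · exact hbx rfl
end

section
/- For n ≥ 4, the 1-nearly edge independence number of the complete graph K_n equals ⌊(n+1)/2⌋. -/
open scoped Classical

-- double counting helper
lemma dc {α β : Type*} (s : Finset α) (t : Finset β) (r : α → β → Prop)
    [∀ a b, Decidable (r a b)] :
    ∑ a ∈ s, (t.filter (fun b => r a b)).card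
      = ∑ b ∈ t, (s.filter (fun a => r a b)).card := by
  simp only [Finset.card_filter]
  exact Finset.sum_comm

lemma upper {n : ℕ} (M : Finset (Sym2 (Fin n)))
    (hM : IsOneNearlyEdgeIndep (⊤ : SimpleGraph (Fin n)) M) :
    M.card ≤ (n + 1) / 2 := by
  obtain ⟨hsub, hcount⟩ := hM
  set d : Fin n → ℕ := fun v => (M.filter (fun e => v ∈ e)).card with hd
  -- Step 1: ∑ d = 2 * card M
  have h1 : ∑ v : Fin n, d v = 2 * M.card := by
    rw [hd]
    rw [dc Finset.univ M (fun v e => v ∈ e)]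
    have h2each : ∀ e ∈ M, (Finset.univ.filter (fun v => v ∈ e)).card = 2 := by
      intro e he
      have hne : ¬ e.IsDiag := by
        have := hsub he
        simpa using this
      induction e with
      | _ a b =>
        have hab : a ≠ b := by simpa using hne
        have : Finset.univ.filter (fun v => v ∈ s(a,b)) = {a, b} := by
          ext v; simp [Sym2.mem_iff]
        rw [this, Finset.card_pair hab]
    rw [Finset.sum_congr rfl h2each, Finset.sum_const, smul_eq_mul, mul_comm]
  -- Step 2: ∑ d (d-1) ≤ 2
  have h2 : ∑ v : Fin n, d v * (d v - 1) ≤ 2 := by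
    have heq : ∀ v : Fin n, d v * (d v - 1)
        = (M.offDiag.filter (fun p => v ∈ p.1 ∧ v ∈ p.2)).card := by
      intro v
      have : (M.filter (fun e => v ∈ e)).offDiag
          = M.offDiag.filter (fun p => v ∈ p.1 ∧ v ∈ p.2) := by
        ext ⟨x, y⟩
        simp only [Finset.mem_offDiag, Finset.mem_filter]
        tauto
      have hc := Finset.offDiag_card (M.filter (fun e => v ∈ e))
      rw [this] at hc
      rw [hd]
      simp only []
      rw [hc]
      rw [Nat.mul_sub, mul_one]
    calc ∑ v : Fin n, d v * (d v - 1)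
        = ∑ v : Fin n, (M.offDiag.filter (fun p => v ∈ p.1 ∧ v ∈ p.2)).card :=
          Finset.sum_congr rfl (fun v _ => heq v)
      _ = ∑ p ∈ M.offDiag, (Finset.univ.filter (fun v => v ∈ p.1 ∧ v ∈ p.2)).card :=
          dc Finset.univ M.offDiag (fun v p => v ∈ p.1 ∧ v ∈ p.2)
      _ ≤ ∑ p ∈ M.offDiag, (if ShareVertex p.1 p.2 then 1 else 0) := by
          refine Finset.sum_le_sum (fun p hp => ?_)
          by_cases hs : ShareVertex p.1 p.2
          · simp only [hs, if_true]
            rw [Finset.card_le_one]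
            rintro a ha b hb
            simp only [Finset.mem_filter] at ha hb
            by_contra hab
            have hp1 : p.1 = s(a, b) := (Sym2.mem_and_mem_iff hab).1 ⟨ha.2.1, hb.2.1⟩
            have hp2 : p.2 = s(a, b) := (Sym2.mem_and_mem_iff hab).1 ⟨ha.2.2, hb.2.2⟩
            have := (Finset.mem_offDiag.1 hp).2.2
            exact this (hp1.trans hp2.symm)
          · simp only [hs, if_false]
            have : Finset.univ.filter (fun v : Fin n => v ∈ p.1 ∧ v ∈ p.2) = ∅ := by
              ext v; simp only [Finset.mem_filter, Finset.mem_univ, true_and,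
                Finset.notMem_empty, iff_false]
              intro h; exact hs ⟨v, h⟩
            simp [this]
      _ = (M.offDiag.filter (fun p => ShareVertex p.1 p.2)).card := by
          rw [Finset.card_filter]
      _ = 2 := by
          convert hcount using 2
  -- combine
  have h3 : ∀ k : ℕ, 2 * k ≤ 2 + k * (k - 1) := by
    intro k
    rcases k with _ | _ | k
    · simp
    · simp
    · show 2*(k+2) ≤ 2 + (k+2)*(k+1)
      nlinarith
  have h4 : 2 * ∑ v : Fin n, d v ≤ 2 * n + 2 := by
    calc 2 * ∑ v : Fin n, d v = ∑ v : Fin n, 2 * d v := by rw [Finset.mul_sum]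
      _ ≤ ∑ v : Fin n, (2 + d v * (d v - 1)) := Finset.sum_le_sum (fun v _ => h3 (d v))
      _ = 2 * n + ∑ v : Fin n, d v * (d v - 1) := by
          rw [Finset.sum_add_distrib, Finset.sum_const]
          simp [mul_comm]
      _ ≤ 2 * n + 2 := by omega
  rw [h1] at h4
  omega

lemma lower {n : ℕ} (hn : 4 ≤ n) :
    ∃ M : Finset (Sym2 (Fin n)),
      IsOneNearlyEdgeIndep (⊤ : SimpleGraph (Fin n)) M ∧ M.card = (n + 1) / 2 := by
  have hn0 : 0 < n := by omega
  set m : ℕ := (n + 1) / 2 with hm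
  have hm2 : 2 ≤ m := by omega
  have h2m : 2 * m ≤ n + 1 := by omega
  -- the i-th edge: {2i-1, 2i-1+1} (ℕ-truncated subtraction, so edge 0 = {0,1})
  set f : ℕ → Sym2 (Fin n) := fun i =>
    s(⟨(2*i-1) % n, Nat.mod_lt _ hn0⟩, ⟨(2*i-1+1) % n, Nat.mod_lt _ hn0⟩) with hf
  have hmod : ∀ i < m, (2*i-1) % n = 2*i-1 ∧ (2*i-1+1) % n = 2*i-1+1 := by
    intro i hi
    constructor <;> apply Nat.mod_eq_of_lt <;> omega
  have hmemf : ∀ i < m, ∀ v : Fin n, v ∈ f i ↔ (v.val = 2*i-1 ∨ v.val = 2*i-1+1) := by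
    intro i hi v
    obtain ⟨e1, e2⟩ := hmod i hi
    rw [hf]
    simp only [Sym2.mem_iff, Fin.ext_iff, e1, e2]
  have hfne : ∀ i < m, ∀ j < m, i ≠ j → f i ≠ f j := by
    intro i hi j hj hij hfij
    have h1 : (⟨(2*i-1) % n, Nat.mod_lt _ hn0⟩ : Fin n) ∈ f i := by
      rw [hf]; exact Sym2.mem_mk_left _ _
    rw [hfij, hmemf j hj] at h1
    simp only [(hmod i hi).1] at h1
    have h2 : (⟨(2*i-1+1) % n, Nat.mod_lt _ hn0⟩ : Fin n) ∈ f i := by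
      rw [hf]; exact Sym2.mem_mk_right _ _
    rw [hfij, hmemf j hj] at h2
    simp only [(hmod i hi).2] at h2
    omega
  set M : Finset (Sym2 (Fin n)) := (Finset.range m).image f with hM
  have hcard : M.card = m := by
    rw [hM, Finset.card_image_of_injOn, Finset.card_range]
    intro i hi j hj hij
    simp only [Finset.mem_coe, Finset.mem_range] at hi hj
    by_contra hne
    exact hfne i hi j hj hne hij
  have hmemM : ∀ e, e ∈ M ↔ ∃ i < m, f i = e := by
    intro e; rw [hM]; simp [Finset.mem_image]
  refine ⟨M, ⟨?_, ?_⟩, hcard⟩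
  · -- subset of edges
    intro e he
    simp only [Finset.mem_coe] at he
    obtain ⟨i, hi, rfl⟩ := (hmemM e).1 he
    rw [hf]
    simp only [SimpleGraph.mem_edgeSet, SimpleGraph.top_adj, ne_eq, Fin.ext_iff]
    obtain ⟨e1, e2⟩ := hmod i hi
    simp only [e1, e2]
    omega
  · -- exactly one sharing pair
    rw [Finset.card_eq_two]
    have hne01 : f 0 ≠ f 1 := hfne 0 (by omega) 1 (by omega) (by omega)
    refine ⟨(f 0, f 1), (f 1, f 0), fun h => hne01 (congrArg Prod.fst h), ?_⟩
    ext p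
    simp only [Finset.mem_filter, Finset.mem_offDiag, Finset.mem_insert,
      Finset.mem_singleton]
    constructor
    · rintro ⟨⟨hp1, hp2, hpne⟩, v, hv1, hv2⟩
      obtain ⟨i, hi, hfi⟩ := (hmemM p.1).1 hp1
      obtain ⟨j, hj, hfj⟩ := (hmemM p.2).1 hp2
      have hij : i ≠ j := by
        rintro rfl; exact hpne (hfi ▸ hfj ▸ rfl)
      rw [← hfi, hmemf i hi] at hv1
      rw [← hfj, hmemf j hj] at hv2
      have : (i = 0 ∧ j = 1) ∨ (i = 1 ∧ j = 0) := by omega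
      rcases this with ⟨rfl, rfl⟩ | ⟨rfl, rfl⟩
      · left; exact Prod.ext hfi.symm hfj.symm
      · right; exact Prod.ext hfi.symm hfj.symm
    · have h0M : f 0 ∈ M := (hmemM _).2 ⟨0, by omega, rfl⟩
      have h1M : f 1 ∈ M := (hmemM _).2 ⟨1, by omega, rfl⟩
      have hsh : ShareVertex (f 0) (f 1) := by
        refine ⟨⟨1 % n, Nat.mod_lt _ hn0⟩, ?_, ?_⟩
        · rw [hmemf 0 (by omega)]
          right; simp [Nat.mod_eq_of_lt (show 1 < n by omega)]
        · rw [hmemf 1 (by omega)]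
          left; simp [Nat.mod_eq_of_lt (show 1 < n by omega)]
      have hsh' : ShareVertex (f 1) (f 0) := by
        obtain ⟨v, h1, h2⟩ := hsh; exact ⟨v, h2, h1⟩
      rintro (rfl | rfl)
      · exact ⟨⟨h0M, h1M, hne01⟩, hsh⟩
      · exact ⟨⟨h1M, h0M, hne01.symm⟩, hsh'⟩

theorem edgeAlpha1_completeGraph {n : ℕ} (hn : 4 ≤ n) :
    edgeAlpha1 (⊤ : SimpleGraph (Fin n)) = (n + 1) / 2 := by
  obtain ⟨M, hM, hMcard⟩ := lower hn
  have hmem : (n + 1) / 2 ∈ {k | ∃ M : Finset (Sym2 (Fin n)),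
      IsOneNearlyEdgeIndep (⊤ : SimpleGraph (Fin n)) M ∧ M.card = k} := ⟨M, hM, hMcard⟩
  have hub : ∀ k ∈ {k | ∃ M : Finset (Sym2 (Fin n)),
      IsOneNearlyEdgeIndep (⊤ : SimpleGraph (Fin n)) M ∧ M.card = k}, k ≤ (n + 1) / 2 := by
    rintro k ⟨M', hM', rfl⟩
    exact upper M' hM'
  exact le_antisymm (csSup_le ⟨_, hmem⟩ hub) (le_csSup ⟨_, hub⟩ hmem)
end
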